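/- arXiv:2507.18629 — 6 statements merged into one kernel-verified Lean document; each statement's English description precedes it below -/
import Mathlib

section
/- Let U ⊆ 2^[N] be an r-spread family, A ⊆ U a nonempty subfamily, and 0 < r' < r. Then there exists a set S ⊆ [N] such that the family A(S) = {F \ S : F ∈ A, S ⊆ F} is r'-spread, and |S| ≤ (log|U| − log|A|)/(log r − log r'). -/
/-- A family `𝒜 ⊆ 2^[N]` is `r`-spread if for every `S`, the number of members of `𝒜`
containing `S` is at most `r ^ (-|S|) * |𝒜|`. -/
def IsSpread {N : ℕ} (r : ℝ) (𝒜 : Finset (Finset (Fin N))) : Prop :=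
  ∀ S : Finset (Fin N),
    ((𝒜.filter (fun F => S ⊆ F)).card : ℝ) ≤ r ^ (-(S.card : ℤ)) * 𝒜.card

/-- `𝒜(S) = {F \ S : F ∈ 𝒜, S ⊆ F}`. -/
def famRes {N : ℕ} (𝒜 : Finset (Finset (Fin N))) (S : Finset (Fin N)) :
    Finset (Finset (Fin N)) :=
  (𝒜.filter (fun F => S ⊆ F)).image (fun F => F \ S)

theorem finding_spread_family {N : ℕ} (r r' : ℝ) (hr' : 0 < r') (hrr' : r' < r)
    (𝒰 𝒜 : Finset (Finset (Fin N))) (h𝒰 : IsSpread r 𝒰) (h𝒜𝒰 : 𝒜 ⊆ 𝒰)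
    (h𝒜 : 𝒜.Nonempty) :
    ∃ S : Finset (Fin N), IsSpread r' (famRes 𝒜 S) ∧
      (S.card : ℝ) ≤ (Real.log 𝒰.card - Real.log 𝒜.card) / (Real.log r - Real.log r') := by
  classical
  have hr0 : 0 < r := hr'.trans hrr'
  set c : Finset (Fin N) → ℕ := fun S => (𝒜.filter (fun F => S ⊆ F)).card with hc
  obtain ⟨S, -, hmax⟩ := Finset.exists_max_image (Finset.univ : Finset (Finset (Fin N)))
    (fun S => (c S : ℝ) * r' ^ S.card) ⟨∅, Finset.mem_univ ∅⟩
  have hmax' : ∀ T : Finset (Fin N), (c T : ℝ) * r' ^ T.card ≤ (c S : ℝ) * r' ^ S.card :=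
    fun T => hmax T (Finset.mem_univ T)
  -- card of the restricted family
  have hres : (famRes 𝒜 S).card = c S := by
    rw [famRes]
    apply Finset.card_image_of_injOn
    intro a ha b hb hab
    simp only [Finset.mem_coe, Finset.mem_filter] at ha hb
    have h := congrArg (fun X => X ∪ S) hab
    simpa [Finset.sdiff_union_of_subset ha.2, Finset.sdiff_union_of_subset hb.2] using h
  have key : ∀ T : Finset (Fin N),
      (((famRes 𝒜 S).filter (fun F => T ⊆ F)).card : ℝ) ≤ r' ^ (-(T.card : ℤ)) * c S := by
    intro T
    by_cases hd : Disjoint S T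
    · have hle : ((famRes 𝒜 S).filter (fun F => T ⊆ F)).card ≤ c (S ∪ T) := by
        apply Finset.card_le_card_of_injOn (fun G => G ∪ S)
        · intro G hG
          simp only [Finset.mem_coe, Finset.mem_filter, famRes, Finset.mem_image] at hG ⊢
          obtain ⟨⟨F, hF, rfl⟩, hTG⟩ := hG
          rw [Finset.sdiff_union_of_subset hF.2]
          exact ⟨hF.1, Finset.union_subset hF.2 (hTG.trans Finset.sdiff_subset)⟩
        · intro a ha b hb hab
          simp only [Finset.coe_filter, Set.mem_setOf_eq, famRes, Finset.mem_image] at ha hb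
          obtain ⟨⟨Fa, hFa, rfl⟩, -⟩ := ha
          obtain ⟨⟨Fb, hFb, rfl⟩, -⟩ := hb
          have h := congrArg (fun X => X \ S) hab
          simpa [Finset.union_sdiff_distrib, Finset.sdiff_idem] using h
      have hcard : (S ∪ T).card = S.card + T.card := Finset.card_union_of_disjoint hd
      have h1 := hmax' (S ∪ T)
      rw [hcard, pow_add] at h1
      rw [zpow_neg, zpow_natCast, inv_mul_eq_div, le_div_iff₀ (pow_pos hr' _)]
      have h2 : ((((famRes 𝒜 S).filter (fun F => T ⊆ F)).card : ℝ)) ≤ (c (S ∪ T) : ℝ) := by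
        exact_mod_cast hle
      have hps : (0:ℝ) < r' ^ S.card := pow_pos hr' _
      have hpt : (0:ℝ) ≤ r' ^ T.card := (pow_pos hr' _).le
      nlinarith [mul_le_mul_of_nonneg_right h2 hpt]
    · have hempty : (famRes 𝒜 S).filter (fun F => T ⊆ F) = ∅ := by
        apply Finset.filter_false_of_mem
        intro G hG hTG
        simp only [famRes, Finset.mem_image, Finset.mem_filter] at hG
        obtain ⟨F, hF, rfl⟩ := hG
        exact hd (Finset.disjoint_of_subset_right (hTG.trans (Finset.Subset.refl _))
          Finset.sdiff_disjoint.symm)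
      rw [hempty]
      simp only [Finset.card_empty, Nat.cast_zero]
      positivity
  refine ⟨S, ?_, ?_⟩
  · intro T
    rw [hres]
    exact key T
  · -- size bound
    have hc0 : c ∅ = 𝒜.card := by
      simp [hc, Finset.filter_true_of_mem (fun F _ => Finset.empty_subset F)]
    have h1 : (𝒜.card : ℝ) ≤ (c S : ℝ) * r' ^ S.card := by
      have := hmax' ∅
      simpa [hc0] using this
    have h2 : (c S : ℝ) ≤ r ^ (-(S.card : ℤ)) * 𝒰.card := by
      have hsub : (𝒜.filter (fun F => S ⊆ F)).card ≤ (𝒰.filter (fun F => S ⊆ F)).card :=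
        Finset.card_le_card (Finset.filter_subset_filter _ h𝒜𝒰)
      exact le_trans (by exact_mod_cast hsub) (h𝒰 S)
    have h2' : (c S : ℝ) * r ^ S.card ≤ (𝒰.card : ℝ) := by
      rw [zpow_neg, zpow_natCast, inv_mul_eq_div] at h2
      rwa [← le_div_iff₀ (pow_pos hr0 _)]
    have h3 : (𝒜.card : ℝ) * r ^ S.card ≤ (𝒰.card : ℝ) * r' ^ S.card := by
      nlinarith [pow_pos hr0 S.card, pow_pos hr' S.card, (c S).cast_nonneg (α := ℝ)]
    have hA0 : (0:ℝ) < 𝒜.card := by exact_mod_cast Finset.card_pos.mpr h𝒜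
    have hU0 : (0:ℝ) < 𝒰.card := by
      exact_mod_cast Finset.card_pos.mpr (h𝒜.mono h𝒜𝒰)
    have hlog := Real.log_le_log (by positivity) h3
    rw [Real.log_mul (ne_of_gt hA0) (by positivity),
        Real.log_mul (ne_of_gt hU0) (by positivity),
        Real.log_pow, Real.log_pow] at hlog
    have hlr : 0 < Real.log r - Real.log r' :=
      sub_pos.mpr (Real.log_lt_log hr' hrr')
    rw [le_div_iff₀ hlr]
    nlinarith [hlog]
end

section
/- Let F be a spanning forest of the complete graph K_n whose connected components have sizes q_1, q_2, ..., q_r (so q_1 + ... + q_r = n). Then the number of spanning trees of K_n containing F equals q_1·q_2·...·q_r · n^{n−2−∑_{i=1}^r (q_i−1)} = q_1·q_2·...·q_r · n^{r−2}. -/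
open SimpleGraph

variable {V : Type*}

lemma reachable_sup_edge {G : SimpleGraph V} {u v x y : V}
    (h : (G ⊔ edge u v).Reachable x y) :
    G.Reachable x y ∨ (G.Reachable x u ∧ G.Reachable v y) ∨
      (G.Reachable x v ∧ G.Reachable u y) := by
  obtain ⟨w⟩ := h
  induction w with
  | nil => exact Or.inl (Reachable.refl _)
  | @cons a b c h p ih =>
    rcases (sup_adj _ _ _ _).mp h with hG | he
    · rcases ih with h1 | ⟨h1, h2⟩ | ⟨h1, h2⟩
      · exact Or.inl (hG.reachable.trans h1)
      · exact Or.inr (Or.inl ⟨hG.reachable.trans h1, h2⟩)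
      · exact Or.inr (Or.inr ⟨hG.reachable.trans h1, h2⟩)
    · rw [edge_adj] at he
      rcases he.1 with ⟨rfl, rfl⟩ | ⟨rfl, rfl⟩
      · rcases ih with h1 | ⟨h1, h2⟩ | ⟨h1, h2⟩
        · exact Or.inr (Or.inl ⟨Reachable.refl _, h1⟩)
        · exact Or.inr (Or.inl ⟨Reachable.refl _, h2⟩)
        · exact Or.inl h2
      · rcases ih with h1 | ⟨h1, h2⟩ | ⟨h1, h2⟩
        · exact Or.inr (Or.inr ⟨Reachable.refl _, h1⟩)
        · exact Or.inl h2
        · exact Or.inr (Or.inr ⟨Reachable.refl _, h2⟩)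

lemma reachable_sup_edge_iff {G : SimpleGraph V} {u v x y : V} :
    (G ⊔ edge u v).Reachable x y ↔ G.Reachable x y ∨ (G.Reachable x u ∧ G.Reachable v y) ∨
      (G.Reachable x v ∧ G.Reachable u y) := by
  constructor
  · exact reachable_sup_edge
  · rcases eq_or_ne u v with rfl | huv
    · rintro (h | ⟨h1, h2⟩ | ⟨h1, h2⟩)
      · exact h.mono le_sup_left
      · exact (h1.trans h2).mono le_sup_left
      · exact (h1.trans h2).mono le_sup_left
    · have huv' : (G ⊔ edge u v).Reachable u v :=
        (Adj.reachable (by simp [sup_adj, edge_adj, huv]))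
      rintro (h | ⟨h1, h2⟩ | ⟨h1, h2⟩)
      · exact h.mono le_sup_left
      · exact ((h1.mono le_sup_left).trans huv').trans (h2.mono le_sup_left)
      · exact ((h1.mono le_sup_left).trans huv'.symm).trans (h2.mono le_sup_left)

section Merge
variable {G : SimpleGraph V} {u v : V}

/-- The map on components induced by adding an edge. -/
noncomputable def mergeMap (G : SimpleGraph V) (u v : V) :
    G.ConnectedComponent → (G ⊔ edge u v).ConnectedComponent :=
  ConnectedComponent.map (Hom.ofLE le_sup_left)

lemma mergeMap_mk (x : V) :
    mergeMap G u v (G.connectedComponentMk x) = (G ⊔ edge u v).connectedComponentMk x := rfl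

lemma mergeMap_eq_iff (hn : ¬G.Reachable u v) (c d : G.ConnectedComponent) :
    mergeMap G u v c = mergeMap G u v d ↔
      c = d ∨ (c = G.connectedComponentMk u ∧ d = G.connectedComponentMk v) ∨
        (c = G.connectedComponentMk v ∧ d = G.connectedComponentMk u) := by
  refine ConnectedComponent.ind₂ (fun x y => ?_) c d
  simp only [mergeMap_mk, ConnectedComponent.eq, reachable_sup_edge_iff]
  constructor
  · rintro (h | ⟨h1, h2⟩ | ⟨h1, h2⟩)
    · exact Or.inl h
    · exact Or.inr (Or.inl ⟨h1, h2.symm⟩)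
    · exact Or.inr (Or.inr ⟨h1, h2.symm⟩)
  · rintro (h | ⟨h1, h2⟩ | ⟨h1, h2⟩)
    · exact Or.inl h
    · exact Or.inr (Or.inl ⟨h1, h2.symm⟩)
    · exact Or.inr (Or.inr ⟨h1, h2.symm⟩)

lemma mergeMap_surjective : Function.Surjective (mergeMap G u v) := by
  intro c'
  refine ConnectedComponent.ind (fun x => ?_) c'
  exact ⟨G.connectedComponentMk x, rfl⟩

lemma cu_ne_cv (hn : ¬G.Reachable u v) :
    G.connectedComponentMk u ≠ G.connectedComponentMk v := by
  simpa [ConnectedComponent.eq] using hn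

lemma supp_mergeMap_same (hn : ¬G.Reachable u v) {c : G.ConnectedComponent}
    (hcu : c ≠ G.connectedComponentMk u) (hcv : c ≠ G.connectedComponentMk v) :
    (mergeMap G u v c).supp = c.supp := by
  ext x
  simp only [ConnectedComponent.mem_supp_iff]
  rw [show (G ⊔ edge u v).connectedComponentMk x = mergeMap G u v (G.connectedComponentMk x) from
    rfl, mergeMap_eq_iff hn]
  constructor
  · rintro (h | ⟨h1, h2⟩ | ⟨h1, h2⟩)
    · exact h
    · exact absurd h2 hcv
    · exact absurd h2 hcu
  · exact fun h => Or.inl h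

lemma supp_mergeMap_merged (hn : ¬G.Reachable u v) :
    (mergeMap G u v (G.connectedComponentMk u)).supp =
      (G.connectedComponentMk u).supp ∪ (G.connectedComponentMk v).supp := by
  ext x
  simp only [ConnectedComponent.mem_supp_iff, Set.mem_union]
  rw [show (G ⊔ edge u v).connectedComponentMk x = mergeMap G u v (G.connectedComponentMk x) from
    rfl, mergeMap_eq_iff hn]
  constructor
  · rintro (h | ⟨h1, h2⟩ | ⟨h1, h2⟩)
    · exact Or.inl h
    · exact Or.inl h1
    · exact Or.inr h1
  · rintro (h | h)
    · exact Or.inl h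
    · exact Or.inr (Or.inr ⟨h, rfl⟩)


section Counting
variable [Fintype V] {G : SimpleGraph V} {u v : V}

lemma disjoint_supp_of_ne {c d : G.ConnectedComponent} (h : c ≠ d) :
    Disjoint c.supp d.supp := by
  rw [Set.disjoint_left]
  intro x hx hx'
  rw [ConnectedComponent.mem_supp_iff] at hx hx'
  exact h (hx ▸ hx'.symm ▸ rfl)

lemma sum_card_supp (G : SimpleGraph V) :
    ∑ᶠ c : G.ConnectedComponent, Nat.card c.supp = Fintype.card V := by
  classical
  letI : Fintype G.ConnectedComponent := Fintype.ofFinite _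
  rw [finsum_eq_sum_of_fintype]
  have e : (Σ c : G.ConnectedComponent, {x // G.connectedComponentMk x = c}) ≃ V :=
    Equiv.sigmaFiberEquiv _
  have h1 : Fintype.card V = ∑ c : G.ConnectedComponent,
      Fintype.card {x // G.connectedComponentMk x = c} := by
    rw [← Fintype.card_sigma]
    exact Fintype.card_congr e.symm
  rw [h1]
  refine Finset.sum_congr rfl fun c _ => ?_
  rw [← Nat.card_eq_fintype_card]
  exact Nat.card_congr (Equiv.subtypeEquivRight (by
    intro x; rw [ConnectedComponent.mem_supp_iff]))

lemma card_supp_merged (hn : ¬G.Reachable u v) :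
    Nat.card (mergeMap G u v (G.connectedComponentMk u)).supp =
      Nat.card (G.connectedComponentMk u).supp + Nat.card (G.connectedComponentMk v).supp := by
  rw [supp_mergeMap_merged hn]
  simp only [Nat.card_coe_set_eq]
  exact Set.ncard_union_eq (disjoint_supp_of_ne (cu_ne_cv hn)) (Set.toFinite _) (Set.toFinite _)

lemma card_cc_sup_edge (hn : ¬G.Reachable u v) :
    Nat.card G.ConnectedComponent = Nat.card (G ⊔ edge u v).ConnectedComponent + 1 := by
  classical
  letI : Fintype G.ConnectedComponent := Fintype.ofFinite _
  letI : Fintype (G ⊔ edge u v).ConnectedComponent := Fintype.ofFinite _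
  rw [Nat.card_eq_fintype_card, Nat.card_eq_fintype_card]
  have key : Finset.card (Finset.univ.erase (G.connectedComponentMk v)) =
      Fintype.card (G ⊔ edge u v).ConnectedComponent := by
    rw [← Finset.card_univ]
    refine Finset.card_bij (fun c _ => mergeMap G u v c) (fun _ _ => Finset.mem_univ _)
      ?_ ?_
    · intro c hc d hd h
      rcases (mergeMap_eq_iff hn c d).mp h with h | ⟨h1, h2⟩ | ⟨h1, h2⟩
      · exact h
      · exact absurd h2 (Finset.ne_of_mem_erase hd)
      · exact absurd h1 (Finset.ne_of_mem_erase hc)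
    · intro c' _
      obtain ⟨c, rfl⟩ := mergeMap_surjective c'
      rcases eq_or_ne c (G.connectedComponentMk v) with rfl | h
      · refine ⟨G.connectedComponentMk u, Finset.mem_erase.mpr ⟨cu_ne_cv hn, Finset.mem_univ _⟩,
          ?_⟩
        rw [mergeMap_eq_iff hn]
        exact Or.inr (Or.inl ⟨rfl, rfl⟩)
      · exact ⟨c, Finset.mem_erase.mpr ⟨h, Finset.mem_univ _⟩, rfl⟩
  rw [← key, Finset.card_erase_of_mem (Finset.mem_univ _), Finset.card_univ]
  have : 0 < Fintype.card G.ConnectedComponent := Fintype.card_pos_iff.mpr ⟨G.connectedComponentMk u⟩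
  omega

lemma prod_supp_sup_edge (hn : ¬G.Reachable u v) :
    ∏ᶠ c : (G ⊔ edge u v).ConnectedComponent, Nat.card c.supp =
      (Nat.card (G.connectedComponentMk u).supp + Nat.card (G.connectedComponentMk v).supp) *
        ∏ᶠ c : {c : G.ConnectedComponent //
          c ≠ G.connectedComponentMk u ∧ c ≠ G.connectedComponentMk v},
          Nat.card (c : G.ConnectedComponent).supp := by
  classical
  letI : Fintype G.ConnectedComponent := Fintype.ofFinite _
  letI : Fintype (G ⊔ edge u v).ConnectedComponent := Fintype.ofFinite _
  rw [finprod_eq_prod_of_fintype, finprod_eq_prod_of_fintype]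
  have key : ∏ c : (G ⊔ edge u v).ConnectedComponent, Nat.card c.supp =
      ∏ c ∈ Finset.univ.erase (G.connectedComponentMk v), Nat.card (mergeMap G u v c).supp := by
    refine (Finset.prod_bij (fun c _ => mergeMap G u v c) (fun _ _ => Finset.mem_univ _)
      ?_ ?_ (fun _ _ => rfl)).symm
    · intro c hc d hd h
      rcases (mergeMap_eq_iff hn c d).mp h with h | ⟨h1, h2⟩ | ⟨h1, h2⟩
      · exact h
      · exact absurd h2 (Finset.ne_of_mem_erase hd)
      · exact absurd h1 (Finset.ne_of_mem_erase hc)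
    · intro c' _
      obtain ⟨c, rfl⟩ := mergeMap_surjective c'
      rcases eq_or_ne c (G.connectedComponentMk v) with rfl | h
      · refine ⟨G.connectedComponentMk u, Finset.mem_erase.mpr ⟨cu_ne_cv hn, Finset.mem_univ _⟩,
          ?_⟩
        rw [mergeMap_eq_iff hn]
        exact Or.inr (Or.inl ⟨rfl, rfl⟩)
      · exact ⟨c, Finset.mem_erase.mpr ⟨h, Finset.mem_univ _⟩, rfl⟩
  rw [key]
  have hmem : G.connectedComponentMk u ∈ Finset.univ.erase (G.connectedComponentMk v) :=
    Finset.mem_erase.mpr ⟨cu_ne_cv hn, Finset.mem_univ _⟩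
  rw [← Finset.mul_prod_erase _ _ hmem, card_supp_merged hn]
  congr 1
  rw [← Finset.prod_subtype ((Finset.univ.erase (G.connectedComponentMk v)).erase
      (G.connectedComponentMk u)) (p := fun c : G.ConnectedComponent =>
        c ≠ G.connectedComponentMk u ∧ c ≠ G.connectedComponentMk v)
      (by intro c; simp [and_comm]) (fun c => Nat.card c.supp)]
  refine Finset.prod_congr rfl fun c hc => ?_
  rw [supp_mergeMap_same hn (Finset.mem_erase.mp hc).1
    (Finset.mem_erase.mp (Finset.mem_erase.mp hc).2).1]

lemma prod_supp_split (hn : ¬G.Reachable u v) :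
    ∏ᶠ c : G.ConnectedComponent, Nat.card c.supp =
      (Nat.card (G.connectedComponentMk u).supp * Nat.card (G.connectedComponentMk v).supp) *
        ∏ᶠ c : {c : G.ConnectedComponent //
          c ≠ G.connectedComponentMk u ∧ c ≠ G.connectedComponentMk v},
          Nat.card (c : G.ConnectedComponent).supp := by
  classical
  letI : Fintype G.ConnectedComponent := Fintype.ofFinite _
  rw [finprod_eq_prod_of_fintype, finprod_eq_prod_of_fintype]
  have h1 : G.connectedComponentMk u ∈ (Finset.univ : Finset G.ConnectedComponent) :=
    Finset.mem_univ _
  rw [← Finset.mul_prod_erase _ _ h1]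
  have h2 : G.connectedComponentMk v ∈ Finset.univ.erase (G.connectedComponentMk u) :=
    Finset.mem_erase.mpr ⟨(cu_ne_cv hn).symm, Finset.mem_univ _⟩
  rw [← Finset.mul_prod_erase _ _ h2, ← mul_assoc]
  congr 1
  rw [← Finset.prod_subtype ((Finset.univ.erase (G.connectedComponentMk u)).erase
      (G.connectedComponentMk v)) (p := fun c : G.ConnectedComponent =>
        c ≠ G.connectedComponentMk u ∧ c ≠ G.connectedComponentMk v)
      (by intro c; simp [and_comm]) (fun c => Nat.card c.supp)]

end Counting

section Acyclic
variable {V : Type*}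


lemma isAcyclic_anti {G H : SimpleGraph V} (h : H ≤ G) (hG : G.IsAcyclic) : H.IsAcyclic :=
  fun _ c hc => hG (c.mapLe h) (hc.mapLe h)

lemma card_cc_eq_one {G : SimpleGraph V} (hG : G.Connected) :
    Nat.card G.ConnectedComponent = 1 := by
  rw [Nat.card_eq_one_iff_unique]
  constructor
  · exact ⟨ConnectedComponent.ind₂ fun v w => ConnectedComponent.sound (hG.preconnected v w)⟩
  · have : Nonempty V := hG.nonempty
    exact ⟨G.connectedComponentMk (Classical.arbitrary V)⟩

lemma connected_of_card_cc {G : SimpleGraph V} [Nonempty V]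
    (h : Nat.card G.ConnectedComponent = 1) : G.Connected := by
  rw [Nat.card_eq_one_iff_unique] at h
  have hs := h.1
  rw [connected_iff]
  refine ⟨fun x y => ?_, inferInstance⟩
  exact ConnectedComponent.eq.mp (Subsingleton.elim (G.connectedComponentMk x)
    (G.connectedComponentMk y))



lemma not_reachable_sdiff_of_acyclic {G : SimpleGraph V} (hG : G.IsAcyclic) {u v : V}
    (h : G.Adj u v) : ¬(G \ fromEdgeSet {s(u, v)}).Reachable u v := by
  have := (isAcyclic_iff_forall_adj_isBridge.mp hG) h
  rw [isBridge_iff] at this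
  exact this

lemma isAcyclic_sup_edge {G : SimpleGraph V} (hG : G.IsAcyclic) {u v : V}
    (hn : ¬G.Reachable u v) : (G ⊔ edge u v).IsAcyclic := by
  have hGuv : ¬G.Adj u v := fun h => hn h.reachable
  rw [isAcyclic_iff_forall_adj_isBridge]
  intro a b hab
  rw [isBridge_iff]
  show ¬((G ⊔ edge u v) \ fromEdgeSet {s(a, b)}).Reachable a b
  rcases (sup_adj _ _ _ _).mp hab with hadj | hedge
  · have hne : ¬((a = u ∧ b = v) ∨ (a = v ∧ b = u)) := by
      rintro (⟨rfl, rfl⟩ | ⟨rfl, rfl⟩)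
      · exact hGuv hadj
      · exact hGuv hadj.symm
    have hre : (G ⊔ edge u v) \ fromEdgeSet {s(a, b)} =
        (G \ fromEdgeSet {s(a, b)}) ⊔ edge u v := by
      ext x y
      simp only [sdiff_adj, sup_adj, fromEdgeSet_adj, edge_adj, Set.mem_singleton_iff,
        Sym2.eq_iff]
      constructor
      · rintro ⟨hG' | he, hnd⟩
        · exact Or.inl ⟨hG', hnd⟩
        · exact Or.inr he
      · rintro (⟨h1, h2⟩ | he)
        · exact ⟨Or.inl h1, h2⟩
        · refine ⟨Or.inr he, ?_⟩
          rintro ⟨(⟨rfl, rfl⟩ | ⟨rfl, rfl⟩), -⟩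
          · rcases he.1 with ⟨rfl, rfl⟩ | ⟨rfl, rfl⟩ <;> exact hne (by tauto)
          · rcases he.1 with ⟨rfl, rfl⟩ | ⟨rfl, rfl⟩ <;> exact hne (by tauto)
    rw [hre]
    intro h
    rcases reachable_sup_edge h with h1 | ⟨h1, h2⟩ | ⟨h1, h2⟩
    · exact not_reachable_sdiff_of_acyclic hG hadj h1
    · exact hn (((h1.mono sdiff_le).symm.trans hadj.reachable).trans (h2.mono sdiff_le).symm)
    · exact hn ((((h1.mono sdiff_le).symm.trans hadj.reachable).trans
        (h2.mono sdiff_le).symm).symm)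
  · rw [edge_adj] at hedge
    have hre : (G ⊔ edge u v) \ fromEdgeSet {s(a, b)} = G := by
      ext x y
      simp only [sdiff_adj, sup_adj, fromEdgeSet_adj, edge_adj, Set.mem_singleton_iff,
        Sym2.eq_iff]
      constructor
      · rintro ⟨hG' | he, hnd⟩
        · exact hG'
        · exfalso
          apply hnd
          refine ⟨?_, he.2⟩
          rcases he.1 with ⟨rfl, rfl⟩ | ⟨rfl, rfl⟩ <;>
            rcases hedge.1 with ⟨rfl, rfl⟩ | ⟨rfl, rfl⟩ <;> tauto
      · intro hxy
        refine ⟨Or.inl hxy, ?_⟩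
        rintro ⟨(⟨rfl, rfl⟩ | ⟨rfl, rfl⟩), -⟩
        · rcases hedge.1 with ⟨rfl, rfl⟩ | ⟨rfl, rfl⟩
          · exact hGuv hxy
          · exact hGuv hxy.symm
        · rcases hedge.1 with ⟨rfl, rfl⟩ | ⟨rfl, rfl⟩
          · exact hGuv hxy.symm
          · exact hGuv hxy
    rw [hre]
    rcases hedge.1 with ⟨rfl, rfl⟩ | ⟨rfl, rfl⟩
    · exact hn
    · exact fun h => hn h.symm

lemma forest_edge_count [Fintype V] :
    ∀ (k : ℕ) (G : SimpleGraph V), G.edgeSet.ncard = k → G.IsAcyclic →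
      k + Nat.card G.ConnectedComponent = Fintype.card V := by
  intro k
  induction k with
  | zero =>
    intro G hk _
    have : G = ⊥ := by
      rw [← edgeSet_eq_empty]
      exact Set.ncard_eq_zero (Set.toFinite _) |>.mp hk
    subst this
    rw [zero_add, ← Nat.card_eq_fintype_card]
    refine (Nat.card_eq_of_bijective (⊥ : SimpleGraph V).connectedComponentMk
      ⟨fun x y h => ?_, fun c => c.exists_rep⟩).symm
    exact reachable_bot.mp (ConnectedComponent.eq.mp h)
  | succ k ih =>
    intro G hk hG
    have hne : G.edgeSet.Nonempty := by
      rw [Set.nonempty_iff_ne_empty]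
      intro h
      rw [h] at hk
      simp at hk
    obtain ⟨e, he⟩ := hne
    induction e with
    | h u v =>
      have hadj : G.Adj u v := he
      set G' := G \ fromEdgeSet {s(u, v)} with hG'def
      have hGeq : G' ⊔ edge u v = G := by
        rw [hG'def]
        ext x y
        simp only [sup_adj, sdiff_adj, fromEdgeSet_adj, edge_adj, Set.mem_singleton_iff,
          Sym2.eq_iff]
        constructor
        · rintro (⟨h1, _⟩ | ⟨(⟨rfl, rfl⟩ | ⟨rfl, rfl⟩), _⟩)
          · exact h1
          · exact hadj
          · exact hadj.symm
        · intro hxy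
          by_cases hc : (x = u ∧ y = v) ∨ (x = v ∧ y = u)
          · exact Or.inr ⟨hc, hxy.ne⟩
          · exact Or.inl ⟨hxy, fun h => hc h.1⟩
      have hG'acyc : G'.IsAcyclic := isAcyclic_anti sdiff_le hG
      have hn' : ¬G'.Reachable u v := not_reachable_sdiff_of_acyclic hG hadj
      have hcard : G'.edgeSet.ncard = k := by
        rw [hG'def, edgeSet_sdiff, edgeSet_fromEdgeSet]
        have hdiag : ({s(u, v)} : Set (Sym2 V)) \ Sym2.diagSet = {s(u, v)} := by
          rw [sdiff_eq_left]
          rw [Set.disjoint_left]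
          rintro e he1 he2
          rw [Set.mem_singleton_iff] at he1
          subst he1
          exact hadj.ne (Sym2.isDiag_iff_proj_eq |>.mp he2)
        rw [hdiag]
        rw [Set.ncard_diff_singleton_of_mem he, hk]
        omega
      have := ih G' hcard hG'acyc
      have hcc := card_cc_sup_edge hn'
      rw [hGeq] at hcc
      omega

end Acyclic
section Main
variable {V : Type*} [Fintype V]

open SimpleGraph

lemma edge_le_of_adj {T : SimpleGraph V} {x y : V} (h : T.Adj x y) : edge x y ≤ T := by
  intro a b hab
  rw [edge_adj] at hab
  rcases hab.1 with ⟨rfl, rfl⟩ | ⟨rfl, rfl⟩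
  · exact h
  · exact h.symm

lemma edge_adj_self {x y : V} (h : x ≠ y) : (edge x y).Adj x y := by
  rw [edge_adj]
  exact ⟨Or.inl ⟨rfl, rfl⟩, h⟩

lemma card_adj_pairs (G : SimpleGraph V) :
    Nat.card {p : V × V // G.Adj p.1 p.2} = 2 * G.edgeSet.ncard := by
  classical
  have e : {p : V × V // G.Adj p.1 p.2} ≃ G.Dart :=
    { toFun := fun p => ⟨p.1, p.2⟩
      invFun := fun d => ⟨d.toProd, d.adj⟩
      left_inv := fun p => rfl
      right_inv := fun d => rfl }
  rw [Nat.card_congr e, Nat.card_eq_fintype_card, dart_card_eq_twice_card_edges]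
  congr 1
  rw [Set.ncard_eq_toFinset_card' G.edgeSet]
  exact congrArg Finset.card (Finset.ext fun e => by simp)

lemma tree_edge_count {T : SimpleGraph V} (hT : T.Connected) (hA : T.IsAcyclic) :
    T.edgeSet.ncard + 1 = Fintype.card V := by
  have := forest_edge_count T.edgeSet.ncard T rfl hA
  rwa [card_cc_eq_one hT] at this

lemma sdiff_edge_count {F T : SimpleGraph V} (hFT : F ≤ T) (hTc : T.Connected)
    (hTa : T.IsAcyclic) :
    (T \ F).edgeSet.ncard + 1 = Nat.card F.ConnectedComponent := by
  have hFa : F.IsAcyclic := isAcyclic_anti hFT hTa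
  have h1 := tree_edge_count hTc hTa
  have h2 := forest_edge_count F.edgeSet.ncard F rfl hFa
  have hnv : Nonempty V := Fintype.card_pos_iff.mp (by omega)
  have hr : 0 < Nat.card F.ConnectedComponent := by
    haveI : Nonempty F.ConnectedComponent := ⟨F.connectedComponentMk (Classical.arbitrary V)⟩
    exact Nat.card_pos
  rw [edgeSet_sdiff, Set.ncard_diff (edgeSet_mono hFT) (Set.toFinite _)]
  omega

lemma tree_unique {F : SimpleGraph V} (hc : F.Connected) (ha : F.IsAcyclic) :
    Nat.card {T : SimpleGraph V // F ≤ T ∧ T.Connected ∧ T.IsAcyclic} = 1 := by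
  rw [Nat.card_eq_one_iff_unique]
  have key : ∀ T : SimpleGraph V, F ≤ T → T.Connected → T.IsAcyclic → F = T := by
    intro T hFT hTc hTa
    have h1 := tree_edge_count hc ha
    have h2 := tree_edge_count hTc hTa
    rw [← edgeSet_inj]
    exact Set.eq_of_subset_of_ncard_le (edgeSet_mono hFT) (by omega) (Set.toFinite _)
  refine ⟨⟨fun T1 T2 => Subtype.ext ?_⟩, ⟨⟨F, le_rfl, hc, ha⟩⟩⟩
  exact (key T1 T1.2.1 T1.2.2.1 T1.2.2.2).symm.trans (key T2 T2.2.1 T2.2.2.1 T2.2.2.2)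

lemma not_reachable_of_tree_edge {F T : SimpleGraph V} (hFT : F ≤ T) (hTa : T.IsAcyclic)
    {x y : V} (hadj : T.Adj x y) (hnF : ¬F.Adj x y) : ¬F.Reachable x y := by
  intro hreach
  have hle : F ≤ T \ fromEdgeSet {s(x, y)} := by
    intro a b hab
    rw [sdiff_adj]
    refine ⟨hFT hab, ?_⟩
    rw [fromEdgeSet_adj]
    rintro ⟨h1, -⟩
    rw [Set.mem_singleton_iff, Sym2.eq_iff] at h1
    rcases h1 with ⟨rfl, rfl⟩ | ⟨rfl, rfl⟩
    · exact hnF hab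
    · exact hnF hab.symm
  exact not_reachable_sdiff_of_acyclic hTa hadj (hreach.mono hle)

lemma finprod_split {α : Type*} [Finite α] (f : α → ℕ) (a b : α) (hab : a ≠ b) :
    ∏ᶠ x, f x = f a * f b * ∏ᶠ x : {x : α // x ≠ a ∧ x ≠ b}, f x := by
  classical
  letI : Fintype α := Fintype.ofFinite _
  rw [finprod_eq_prod_of_fintype, finprod_eq_prod_of_fintype]
  have h1 : a ∈ (Finset.univ : Finset α) := Finset.mem_univ _
  rw [← Finset.mul_prod_erase _ _ h1]
  have h2 : b ∈ Finset.univ.erase a := Finset.mem_erase.mpr ⟨hab.symm, Finset.mem_univ _⟩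
  rw [← Finset.mul_prod_erase _ _ h2, ← mul_assoc]
  congr 1
  rw [← Finset.prod_subtype ((Finset.univ.erase a).erase b)
      (p := fun c : α => c ≠ a ∧ c ≠ b) (by intro c; simp [and_comm]) f]

theorem cayley_general [Nonempty V] :
    ∀ (r : ℕ) (F : SimpleGraph V), Nat.card F.ConnectedComponent = r → F.IsAcyclic →
      Nat.card {T : SimpleGraph V // F ≤ T ∧ T.Connected ∧ T.IsAcyclic} * Fintype.card V ^ 2 =
        (∏ᶠ c : F.ConnectedComponent, Nat.card c.supp) * Fintype.card V ^ r := by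
  intro r
  induction r using Nat.strong_induction_on with
  | _ r ih =>
  intro F hr hF
  haveI : Nonempty F.ConnectedComponent := ⟨F.connectedComponentMk (Classical.arbitrary V)⟩
  match r, hr with
  | 0, hr => exact absurd hr Nat.card_pos.ne'
  | 1, hr =>
    have hc : F.Connected := connected_of_card_cc hr
    have hP : (∏ᶠ c : F.ConnectedComponent, Nat.card c.supp) = Fintype.card V := by
      have hsum := sum_card_supp F
      obtain ⟨hs, hne⟩ := Nat.card_eq_one_iff_unique.mp hr
      letI : Unique F.ConnectedComponent := @Unique.mk' _ ⟨hne.some⟩ hs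
      rw [finprod_unique] at *
      rw [← finsum_unique (f := fun c : F.ConnectedComponent => Nat.card c.supp), hsum]
    rw [tree_unique hc hF, hP, one_mul, pow_one, sq]
  | (m + 2), hr => ?_
  classical
  set n := Fintype.card V with hndef
  set q : F.ConnectedComponent → ℕ := fun c => Nat.card c.supp with hqdef
  -- the doubly-counted set
  set S := {p : SimpleGraph V × V × V // (F ≤ p.1 ∧ p.1.Connected ∧ p.1.IsAcyclic) ∧
      p.1.Adj p.2.1 p.2.2 ∧ ¬F.Adj p.2.1 p.2.2} with hSdef
  set N : SimpleGraph V → ℕ :=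
    fun F' => Nat.card {T : SimpleGraph V // F' ≤ T ∧ T.Connected ∧ T.IsAcyclic} with hNdef
  -- count 1
  have count1 : Nat.card S = N F * (2 * (m + 1)) := by
    have e1 : S ≃ Σ T : {T : SimpleGraph V // F ≤ T ∧ T.Connected ∧ T.IsAcyclic},
        {p : V × V // T.1.Adj p.1 p.2 ∧ ¬F.Adj p.1 p.2} :=
      { toFun := fun s => ⟨⟨s.1.1, s.2.1⟩, ⟨s.1.2, s.2.2⟩⟩
        invFun := fun w => ⟨⟨w.1.1, w.2.1⟩, ⟨w.1.2, w.2.2⟩⟩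
        left_inv := fun s => rfl
        right_inv := fun w => rfl }
    have hfib : ∀ T : {T : SimpleGraph V // F ≤ T ∧ T.Connected ∧ T.IsAcyclic},
        Fintype.card {p : V × V // T.1.Adj p.1 p.2 ∧ ¬F.Adj p.1 p.2} = 2 * (m + 1) := by
      intro T
      rw [← Nat.card_eq_fintype_card]
      have e' : {p : V × V // T.1.Adj p.1 p.2 ∧ ¬F.Adj p.1 p.2} ≃
          {p : V × V // (T.1 \ F).Adj p.1 p.2} :=
        Equiv.subtypeEquivRight (by intro p; rw [sdiff_adj])
      rw [Nat.card_congr e', card_adj_pairs]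
      have hs := sdiff_edge_count T.2.1 T.2.2.1 T.2.2.2
      rw [hr] at hs
      have h' : (T.1 \ F).edgeSet.ncard = m + 1 := by omega
      rw [h']
    rw [Nat.card_congr e1, Nat.card_eq_fintype_card, Fintype.card_sigma]
    rw [Finset.sum_congr rfl (fun T _ => hfib T), Finset.sum_const, smul_eq_mul,
      Finset.card_univ, hNdef]
    exact congrArg (· * (2 * (m + 1))) Nat.card_eq_fintype_card.symm
  -- count 2
  have count2 : Nat.card S = ∑ p : {p : V × V // ¬F.Reachable p.1 p.2},
      N (F ⊔ edge p.1.1 p.1.2) := by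
    have e2 : S ≃ Σ p : {p : V × V // ¬F.Reachable p.1 p.2},
        {T : SimpleGraph V // F ⊔ edge p.1.1 p.1.2 ≤ T ∧ T.Connected ∧ T.IsAcyclic} :=
      { toFun := fun s =>
          ⟨⟨s.1.2, not_reachable_of_tree_edge s.2.1.1 s.2.1.2.2 s.2.2.1 s.2.2.2⟩,
            ⟨s.1.1, sup_le s.2.1.1 (edge_le_of_adj s.2.2.1), s.2.1.2.1, s.2.1.2.2⟩⟩
        invFun := fun w =>
          ⟨⟨w.2.1, w.1.1⟩, ⟨le_trans le_sup_left w.2.2.1, w.2.2.2.1, w.2.2.2.2⟩,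
            (le_trans le_sup_right w.2.2.1)
              (edge_adj_self fun h => w.1.2 (h ▸ Reachable.refl _)),
            fun h => w.1.2 h.reachable⟩
        left_inv := fun s => rfl
        right_inv := fun w => rfl }
    rw [Nat.card_congr e2, Nat.card_eq_fintype_card, Fintype.card_sigma]
    exact Finset.sum_congr rfl fun p _ => (Nat.card_eq_fintype_card).symm
  -- per-edge evaluation via the induction hypothesis
  have E3 : ∀ p : {p : V × V // ¬F.Reachable p.1 p.2},
      N (F ⊔ edge p.1.1 p.1.2) * n ^ 2 =
        ((q (F.connectedComponentMk p.1.1) + q (F.connectedComponentMk p.1.2)) *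
          ∏ᶠ c : {c : F.ConnectedComponent // c ≠ F.connectedComponentMk p.1.1 ∧
            c ≠ F.connectedComponentMk p.1.2}, q (c : F.ConnectedComponent)) * n ^ (m + 1) := by
    rintro ⟨⟨x, y⟩, hp⟩
    dsimp only at hp ⊢
    have hacyc : (F ⊔ edge x y).IsAcyclic := isAcyclic_sup_edge hF hp
    have hcard : Nat.card (F ⊔ edge x y).ConnectedComponent = m + 1 := by
      have := card_cc_sup_edge hp
      omega
    have := ih (m + 1) (by omega) (F ⊔ edge x y) hcard hacyc
    rw [this, prod_supp_sup_edge hp]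
  -- reindex the sum over vertex pairs by pairs of components
  set g : F.ConnectedComponent × F.ConnectedComponent → ℕ := fun d =>
    ((q d.1 + q d.2) *
      ∏ᶠ c : {c : F.ConnectedComponent // c ≠ d.1 ∧ c ≠ d.2}, q (c : F.ConnectedComponent)) *
      n ^ (m + 1) with hgdef
  let e3 : {p : V × V // ¬F.Reachable p.1 p.2} ≃
      Σ d : {d : F.ConnectedComponent × F.ConnectedComponent // d.1 ≠ d.2},
        (d.1.1.supp × d.1.2.supp) :=
    { toFun := fun p => ⟨⟨(F.connectedComponentMk p.1.1, F.connectedComponentMk p.1.2),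
        fun h => p.2 (ConnectedComponent.eq.mp h)⟩, ⟨⟨p.1.1, rfl⟩, ⟨p.1.2, rfl⟩⟩⟩
      invFun := fun w => ⟨(w.2.1.1, w.2.2.1), fun h => w.1.2
        (((ConnectedComponent.mem_supp_iff _ _).mp w.2.1.2).symm.trans
          ((ConnectedComponent.eq.mpr h).trans
            ((ConnectedComponent.mem_supp_iff _ _).mp w.2.2.2)))⟩
      left_inv := fun p => rfl
      right_inv := fun w => by
        rcases w with ⟨⟨⟨a, b⟩, hab⟩, ⟨⟨x, hx⟩, ⟨y, hy⟩⟩⟩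
        rw [ConnectedComponent.mem_supp_iff] at hx hy
        subst hx; subst hy; rfl }
  have E6 : (∑ p : {p : V × V // ¬F.Reachable p.1 p.2},
        g (F.connectedComponentMk p.1.1, F.connectedComponentMk p.1.2)) =
      ∑ d ∈ Finset.univ.offDiag, (q d.1 * q d.2) * g d := by
    rw [Fintype.sum_equiv e3
      (fun p : {p : V × V // ¬F.Reachable p.1 p.2} =>
        g (F.connectedComponentMk p.1.1, F.connectedComponentMk p.1.2))
      (fun w => g w.1.1) (fun p => rfl)]
    rw [← Finset.univ_sigma_univ, Finset.sum_sigma]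
    have h3 : ∀ d : {d : F.ConnectedComponent × F.ConnectedComponent // d.1 ≠ d.2},
        ∑ _x : d.1.1.supp × d.1.2.supp, g d.1 = (q d.1.1 * q d.1.2) * g d.1 := by
      intro d
      rw [Finset.sum_const, smul_eq_mul, Finset.card_univ, Fintype.card_prod]
      simp only [hqdef, Nat.card_eq_fintype_card]
    rw [Finset.sum_congr rfl (fun d _ => h3 d)]
    exact (Finset.sum_subtype Finset.univ.offDiag
      (p := fun d : F.ConnectedComponent × F.ConnectedComponent => d.1 ≠ d.2)
      (by intro d; simp [Finset.mem_offDiag]) (fun d => (q d.1 * q d.2) * g d)).symm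
  have E7 : ∀ d ∈ (Finset.univ.offDiag :
        Finset (F.ConnectedComponent × F.ConnectedComponent)),
      (q d.1 * q d.2) * g d =
        (q d.1 + q d.2) * ((∏ᶠ c : F.ConnectedComponent, q c) * n ^ (m + 1)) := by
    intro d hd
    have hab : d.1 ≠ d.2 := (Finset.mem_offDiag.mp hd).2.2
    have hsplit := finprod_split q d.1 d.2 hab
    rw [hgdef]
    dsimp only
    rw [hsplit]
    ring
  have hq_sum : ∑ c : F.ConnectedComponent, q c = n := by
    have := sum_card_supp F
    rw [finsum_eq_sum_of_fintype] at this
    exact this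
  have hcardCC : Fintype.card F.ConnectedComponent = m + 2 := by
    rw [← Nat.card_eq_fintype_card]; exact hr
  have E8 : ∑ d ∈ (Finset.univ.offDiag :
        Finset (F.ConnectedComponent × F.ConnectedComponent)), (q d.1 + q d.2) =
      2 * (m + 1) * n := by
    have htot : ∑ d ∈ (Finset.univ ×ˢ Finset.univ :
          Finset (F.ConnectedComponent × F.ConnectedComponent)), (q d.1 + q d.2) =
        2 * ((m + 2) * n) := by
      rw [Finset.sum_product]
      have : ∀ a : F.ConnectedComponent, ∑ b : F.ConnectedComponent, (q a + q b) =
          (m + 2) * q a + n := by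
        intro a
        rw [Finset.sum_add_distrib, Finset.sum_const, smul_eq_mul, Finset.card_univ,
          hcardCC, hq_sum]
      rw [Finset.sum_congr rfl (fun a _ => this a), Finset.sum_add_distrib,
        ← Finset.mul_sum, hq_sum, Finset.sum_const, smul_eq_mul, Finset.card_univ, hcardCC]
      ring
    have hdiageq : (Finset.univ.diag :
        Finset (F.ConnectedComponent × F.ConnectedComponent)) =
        Finset.univ.image (fun a => (a, a)) := by
      ext ⟨a, b⟩
      simp only [Finset.mem_diag, Finset.mem_image, Finset.mem_univ, true_and]
      constructor
      · rintro rfl; exact ⟨a, rfl⟩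
      · rintro ⟨c, hc⟩
        obtain ⟨rfl, rfl⟩ := Prod.mk.inj hc
        rfl
    have hdiagsum : ∑ d ∈ (Finset.univ.diag :
          Finset (F.ConnectedComponent × F.ConnectedComponent)), (q d.1 + q d.2) = 2 * n := by
      rw [hdiageq, Finset.sum_image (by intro a _ b _ h; exact (Prod.mk.inj h).1)]
      have : ∀ a : F.ConnectedComponent, q a + q a = 2 * q a := fun a => by ring
      rw [Finset.sum_congr rfl (fun a _ => this a), ← Finset.mul_sum, hq_sum]
    rw [← Finset.diag_union_offDiag, Finset.sum_union (Finset.disjoint_diag_offDiag _),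
      hdiagsum] at htot
    have hh : 2 * ((m + 2) * n) = 2 * n + 2 * (m + 1) * n := by ring
    rw [hh] at htot
    exact Nat.add_left_cancel htot
  -- put everything together
  have main : Nat.card {T : SimpleGraph V // F ≤ T ∧ T.Connected ∧ T.IsAcyclic} * n ^ 2 *
      (2 * (m + 1)) =
      ((∏ᶠ c : F.ConnectedComponent, q c) * n ^ (m + 2)) * (2 * (m + 1)) := by
    calc Nat.card {T : SimpleGraph V // F ≤ T ∧ T.Connected ∧ T.IsAcyclic} * n ^ 2 *
        (2 * (m + 1)) = Nat.card S * n ^ 2 := by rw [count1, hNdef]; ring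
      _ = ∑ p : {p : V × V // ¬F.Reachable p.1 p.2}, N (F ⊔ edge p.1.1 p.1.2) * n ^ 2 := by
          rw [count2, Finset.sum_mul]
      _ = ∑ p : {p : V × V // ¬F.Reachable p.1 p.2},
            g (F.connectedComponentMk p.1.1, F.connectedComponentMk p.1.2) :=
          Finset.sum_congr rfl fun p _ => E3 p
      _ = ∑ d ∈ Finset.univ.offDiag, (q d.1 * q d.2) * g d := E6
      _ = ∑ d ∈ Finset.univ.offDiag,
            (q d.1 + q d.2) * ((∏ᶠ c : F.ConnectedComponent, q c) * n ^ (m + 1)) :=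
          Finset.sum_congr rfl E7
      _ = (∑ d ∈ Finset.univ.offDiag, (q d.1 + q d.2)) *
            ((∏ᶠ c : F.ConnectedComponent, q c) * n ^ (m + 1)) := by
          rw [Finset.sum_mul]
      _ = (2 * (m + 1) * n) * ((∏ᶠ c : F.ConnectedComponent, q c) * n ^ (m + 1)) := by
          rw [E8]
      _ = ((∏ᶠ c : F.ConnectedComponent, q c) * n ^ (m + 2)) * (2 * (m + 1)) := by ring
  exact Nat.eq_of_mul_eq_mul_right (by omega) main

end Main

/-- Generalized Cayley formula: if `F` is a spanning forest of `K_n` whose connected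
components have sizes `q_1, …, q_r`, then the number of spanning trees of `K_n`
containing `F` is `q_1 ⋯ q_r · n^(r-2)` (stated multiplied through by `n^2` to avoid
negative exponents). -/
theorem count_trees_containing_forest (n : ℕ) (hn : 2 ≤ n)
    (F : SimpleGraph (Fin n)) (hF : F.IsAcyclic) :
    Nat.card {T : SimpleGraph (Fin n) // F ≤ T ∧ T.Connected ∧ T.IsAcyclic} * n ^ 2 =
      (∏ᶠ c : F.ConnectedComponent, Nat.card c.supp) *
        n ^ (Nat.card F.ConnectedComponent) := by
  haveI : Nonempty (Fin n) := ⟨⟨0, by omega⟩⟩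
  have := cayley_general (Nat.card F.ConnectedComponent) F rfl hF
  rwa [Fintype.card_fin] at this
end Merge
end

section
/- If 1 ≤ t ≤ n/2 and F is a forest in K_n with exactly t edges that is not a union of t pairwise vertex-disjoint edges, then the number of spanning trees of K_n containing F is at most (3/4)·2^t·n^{n−t−2}. -/
open SimpleGraph Finset

set_option linter.unusedSectionVars false
set_option maxHeartbeats 1000000

namespace TreeCountAux

attribute [local instance] Classical.propDecidable

variable {V : Type*} [Fintype V] [DecidableEq V]

/-- The set of spanning trees containing `F`. -/
noncomputable def trees (F : SimpleGraph V) : Finset (SimpleGraph V) :=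
  univ.filter fun T => F ≤ T ∧ T.Connected ∧ T.IsAcyclic

/-- The connected component of `u` as a `Finset`. -/
noncomputable def comp (F : SimpleGraph V) (u : V) : Finset V :=
  univ.filter fun v => F.Reachable u v

/-- The set of connected components (as vertex sets). -/
noncomputable def comps (F : SimpleGraph V) : Finset (Finset V) :=
  univ.image (comp F)

lemma mem_comp {F : SimpleGraph V} {u v : V} : v ∈ comp F u ↔ F.Reachable u v := by
  simp [comp]

lemma self_mem_comp (F : SimpleGraph V) (u : V) : u ∈ comp F u := mem_comp.2 (Reachable.refl u)

lemma comp_eq_comp_of_reachable {F : SimpleGraph V} {u v : V} (h : F.Reachable u v) :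
    comp F u = comp F v := by
  ext w
  simp only [mem_comp]
  exact ⟨fun h' => h.symm.trans h', fun h' => h.trans h'⟩

lemma mem_comps {F : SimpleGraph V} {s : Finset V} : s ∈ comps F ↔ ∃ u, comp F u = s := by
  simp [comps, eq_comm]

lemma comp_mem_comps (F : SimpleGraph V) (u : V) : comp F u ∈ comps F := mem_comps.2 ⟨u, rfl⟩

lemma eq_comp_of_mem {F : SimpleGraph V} {s : Finset V} {u : V}
    (hs : s ∈ comps F) (hu : u ∈ s) : s = comp F u := by
  obtain ⟨w, rfl⟩ := mem_comps.1 hs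
  exact comp_eq_comp_of_reachable (mem_comp.1 hu)

lemma reachable_iff_comp_eq {F : SimpleGraph V} {u v : V} :
    F.Reachable u v ↔ comp F u = comp F v :=
  ⟨comp_eq_comp_of_reachable, fun h => mem_comp.1 (h ▸ self_mem_comp F v)⟩

lemma filter_comp_eq {F : SimpleGraph V} {s : Finset V} (hs : s ∈ comps F) :
    univ.filter (fun v => comp F v = s) = s := by
  ext v
  simp only [mem_filter, mem_univ, true_and]
  constructor
  · rintro rfl; exact self_mem_comp F v
  · intro hv; exact (eq_comp_of_mem hs hv).symm

lemma sum_comp_fiber {F : SimpleGraph V} (f : Finset V → ℕ) :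
    ∑ v : V, f (comp F v) = ∑ s ∈ comps F, s.card * f s := by
  rw [← Finset.sum_fiberwise_of_maps_to (g := comp F) (t := comps F)
    (fun v _ => comp_mem_comps F v)]
  refine Finset.sum_congr rfl fun s hs => ?_
  have h1 : ∀ v ∈ univ.filter (fun v => comp F v = s), f (comp F v) = f s := by
    intro v hv
    rw [(mem_filter.1 hv).2]
  rw [Finset.sum_congr rfl h1, Finset.sum_const, filter_comp_eq hs, smul_eq_mul]

lemma sum_card_comps (F : SimpleGraph V) : ∑ s ∈ comps F, s.card = Fintype.card V := by
  have := sum_comp_fiber (F := F) (fun _ => 1)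
  simpa using this.symm

lemma card_edgeFinset_eq_natCard (G : SimpleGraph V) (i : Fintype G.edgeSet) :
    (@SimpleGraph.edgeFinset _ G i).card = Nat.card G.edgeSet := by
  rw [Nat.card_coe_set_eq, @Set.ncard_eq_toFinset_card' _ _ i]
  rfl

lemma natCard_edgeSet (G : SimpleGraph V) [inst : Fintype G.edgeSet] :
    Nat.card G.edgeSet = G.edgeFinset.card :=
  (card_edgeFinset_eq_natCard G inst).symm

lemma adj_of_reachable_of_le {F T : SimpleGraph V} (hle : F ≤ T) (hT : T.IsAcyclic)
    {u v : V} (hadj : T.Adj u v) (hr : F.Reachable u v) : F.Adj u v := by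
  obtain ⟨w⟩ := hr
  set p : F.Walk u v := (w.toPath : F.Walk u v) with hp
  have hpp : p.IsPath := w.toPath.2
  have hsub : ∀ e ∈ p.edges, e ∈ T.edgeSet :=
    fun e he => edgeSet_mono hle (p.edges_subset_edgeSet he)
  have hq : (p.transfer T hsub).IsPath := hpp.transfer hsub
  have huniq := hT.path_unique ⟨p.transfer T hsub, hq⟩ (Path.singleton hadj)
  have hmem : s(u, v) ∈ p.edges := by
    have h2 := congrArg (fun q : T.Path u v => (q : T.Walk u v).edges) huniq
    simp only [Walk.edges_transfer] at h2
    rw [h2]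
    simp [Path.singleton]
  exact (F.mem_edgeSet).1 (p.edges_subset_edgeSet hmem)

lemma reachable_sup_edge_iff {F : SimpleGraph V} {u v x y : V} :
    (F ⊔ edge u v).Reachable x y ↔ F.Reachable x y ∨
      (F.Reachable x u ∧ F.Reachable v y) ∨ (F.Reachable x v ∧ F.Reachable u y) := by
  constructor
  · rintro ⟨w⟩
    induction w with
    | nil => exact Or.inl (Reachable.refl _)
    | @cons a b c h p ih =>
      rcases (sup_adj _ _ _ _).1 h with h' | h'
      · rcases ih with r | ⟨r1, r2⟩ | ⟨r1, r2⟩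
        · exact Or.inl (h'.reachable.trans r)
        · exact Or.inr (Or.inl ⟨h'.reachable.trans r1, r2⟩)
        · exact Or.inr (Or.inr ⟨h'.reachable.trans r1, r2⟩)
      · rcases (edge_adj u v a b).1 h' with ⟨⟨rfl, rfl⟩ | ⟨rfl, rfl⟩, -⟩
        · rcases ih with r | ⟨r1, r2⟩ | ⟨r1, r2⟩
          · exact Or.inr (Or.inl ⟨Reachable.refl _, r⟩)
          · exact Or.inl (r1.symm.trans r2)
          · exact Or.inl r2
        · rcases ih with r | ⟨r1, r2⟩ | ⟨r1, r2⟩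
          · exact Or.inr (Or.inr ⟨Reachable.refl _, r⟩)
          · exact Or.inl r2
          · exact Or.inl (r1.symm.trans r2)
  · by_cases huv : u = v
    · subst huv
      rintro (r | ⟨r1, r2⟩ | ⟨r1, r2⟩)
      · exact r.mono le_sup_left
      · exact (r1.trans r2).mono le_sup_left
      · exact (r1.trans r2).mono le_sup_left
    · have hedge : (F ⊔ edge u v).Reachable u v :=
        ((sup_adj _ _ _ _).2 (Or.inr ((edge_adj u v u v).2 ⟨Or.inl ⟨rfl, rfl⟩, huv⟩))).reachable
      rintro (r | ⟨r1, r2⟩ | ⟨r1, r2⟩)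
      · exact r.mono le_sup_left
      · exact ((r1.mono le_sup_left).trans hedge).trans (r2.mono le_sup_left)
      · exact ((r1.mono le_sup_left).trans hedge.symm).trans (r2.mono le_sup_left)

lemma isAcyclic_sup_edge {F : SimpleGraph V} (hF : F.IsAcyclic) {u v : V}
    (hr : ¬F.Reachable u v) : (F ⊔ edge u v).IsAcyclic := by
  have hne : u ≠ v := fun h => hr (h ▸ Reachable.refl u)
  intro x c hc
  by_cases he : s(u, v) ∈ c.edges
  · have hreach : ((F ⊔ edge u v) \ fromEdgeSet {s(u, v)}).Reachable u v :=
      ((adj_and_reachable_delete_edges_iff_exists_cycle).2 ⟨x, c, hc, he⟩).2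
    refine hr (hreach.mono ?_)
    intro a b hab
    rw [sdiff_adj] at hab
    obtain ⟨hab1, hab2⟩ := hab
    rcases (sup_adj _ _ _ _).1 hab1 with h | h
    · exact h
    · exfalso
      apply hab2
      rw [fromEdgeSet_adj]
      rcases (edge_adj u v a b).1 h with ⟨⟨rfl, rfl⟩ | ⟨rfl, rfl⟩, hne'⟩
      · exact ⟨rfl, hne'⟩
      · exact ⟨Sym2.eq_swap, hne'⟩
  · have hsub : ∀ e ∈ c.edges, e ∈ F.edgeSet := by
      intro e hee
      have h2 := c.edges_subset_edgeSet hee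
      rw [edgeSet_sup] at h2
      rcases h2 with h | h
      · exact h
      · exfalso
        rw [edge_edgeSet_of_ne hne] at h
        exact he (h ▸ hee)
    exact hF (c.transfer F hsub) (hc.transfer hsub)

section SupEdge

variable {F : SimpleGraph V} {u v : V}

lemma comp_sup_edge_left (hr : ¬F.Reachable u v) :
    comp (F ⊔ edge u v) u = comp F u ∪ comp F v := by
  ext y
  simp only [mem_comp, mem_union, reachable_sup_edge_iff]
  constructor
  · rintro (h | ⟨h1, h2⟩ | ⟨h1, h2⟩)
    · exact Or.inl h
    · exact Or.inr h2
    · exact absurd h1 hr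
  · rintro (h | h)
    · exact Or.inl h
    · exact Or.inr (Or.inl ⟨Reachable.refl u, h⟩)

lemma comp_sup_edge_other {x : V}
    (hxu : ¬F.Reachable x u) (hxv : ¬F.Reachable x v) :
    comp (F ⊔ edge u v) x = comp F x := by
  ext y
  simp only [mem_comp, reachable_sup_edge_iff]
  constructor
  · rintro (h | ⟨h1, h2⟩ | ⟨h1, h2⟩)
    · exact h
    · exact absurd h1 hxu
    · exact absurd h1 hxv
  · exact Or.inl

lemma comps_sup_edge (hr : ¬F.Reachable u v) :
    comps (F ⊔ edge u v) =
      insert (comp F u ∪ comp F v) (((comps F).erase (comp F u)).erase (comp F v)) := by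
  ext s
  simp only [mem_insert, mem_erase]
  constructor
  · intro hs
    obtain ⟨x, rfl⟩ := mem_comps.1 hs
    by_cases hxu : F.Reachable x u
    · left
      rw [comp_eq_comp_of_reachable (hxu.mono (le_sup_left : F ≤ F ⊔ edge u v))]
      exact comp_sup_edge_left hr
    · by_cases hxv : F.Reachable x v
      · left
        rw [comp_eq_comp_of_reachable (hxv.mono (le_sup_left : F ≤ F ⊔ edge u v))]
        have hcomm : (edge u v : SimpleGraph V) = edge v u := by
          unfold edge; rw [Sym2.eq_swap]
        rw [hcomm, comp_sup_edge_left (fun h => hr h.symm), union_comm]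
      · right
        rw [comp_sup_edge_other hxu hxv]
        refine ⟨?_, ?_, comp_mem_comps F x⟩
        · intro h
          exact hxv (reachable_iff_comp_eq.2 h)
        · intro h
          exact hxu (reachable_iff_comp_eq.2 h)
  · rintro (rfl | ⟨hv, hu, hs⟩)
    · exact (comp_sup_edge_left hr) ▸ comp_mem_comps _ u
    · obtain ⟨x, rfl⟩ := mem_comps.1 hs
      have hxu : ¬F.Reachable x u := fun h => hu (comp_eq_comp_of_reachable h)
      have hxv : ¬F.Reachable x v := fun h => hv (comp_eq_comp_of_reachable h)
      exact (comp_sup_edge_other hxu hxv) ▸ comp_mem_comps _ x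

lemma comp_disjoint (hr : ¬F.Reachable u v) : Disjoint (comp F u) (comp F v) := by
  rw [Finset.disjoint_left]
  intro x hxu hxv
  exact hr ((mem_comp.1 hxu).trans (mem_comp.1 hxv).symm)

lemma comp_ne (hr : ¬F.Reachable u v) : comp F u ≠ comp F v :=
  fun h => hr (reachable_iff_comp_eq.2 h)

lemma union_not_mem_erase (hr : ¬F.Reachable u v) :
    comp F u ∪ comp F v ∉ ((comps F).erase (comp F u)).erase (comp F v) := by
  intro h
  have hmem : comp F u ∪ comp F v ∈ comps F :=
    Finset.mem_of_mem_erase (Finset.mem_of_mem_erase h)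
  have h1 : comp F u ∪ comp F v = comp F u :=
    eq_comp_of_mem hmem (Finset.mem_union_left _ (self_mem_comp F u))
  have h2 : comp F u ∪ comp F v = comp F v :=
    eq_comp_of_mem hmem (Finset.mem_union_right _ (self_mem_comp F v))
  exact comp_ne hr (h1.symm.trans h2)

lemma card_comps_sup_edge (hr : ¬F.Reachable u v) :
    (comps (F ⊔ edge u v)).card + 1 = (comps F).card := by
  rw [comps_sup_edge hr, Finset.card_insert_of_notMem (union_not_mem_erase hr)]
  have hu : comp F u ∈ comps F := comp_mem_comps F u
  have hv : comp F v ∈ ((comps F).erase (comp F u)) :=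
    Finset.mem_erase.2 ⟨(comp_ne hr).symm, comp_mem_comps F v⟩
  have c1 := Finset.card_erase_of_mem hu
  have c2 := Finset.card_erase_of_mem hv
  have hp1 : 1 ≤ (comps F).card := Finset.card_pos.2 ⟨_, hu⟩
  have hp2 : 1 ≤ ((comps F).erase (comp F u)).card := Finset.card_pos.2 ⟨_, hv⟩
  omega

lemma prod_comps_sup_edge (hr : ¬F.Reachable u v) :
    ∏ s ∈ comps (F ⊔ edge u v), s.card
      = ((comp F u).card + (comp F v).card)
        * ∏ r ∈ ((comps F).erase (comp F u)).erase (comp F v), r.card := by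
  rw [comps_sup_edge hr, Finset.prod_insert (union_not_mem_erase hr),
    Finset.card_union_of_disjoint (comp_disjoint hr)]

end SupEdge

noncomputable def D (F : SimpleGraph V) : Finset (V × V) :=
  univ.filter fun p => ¬F.Reachable p.1 p.2

lemma edge_le_iff_adj {T : SimpleGraph V} {a b : V} (hab : a ≠ b) : edge a b ≤ T ↔ T.Adj a b := by
  constructor
  · intro h
    exact h ((edge_adj a b a b).2 ⟨Or.inl ⟨rfl, rfl⟩, hab⟩)
  · intro h a' b' hab'
    rcases (edge_adj a b a' b').1 hab' with ⟨⟨rfl, rfl⟩ | ⟨rfl, rfl⟩, -⟩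
    exacts [h, h.symm]

lemma trees_sup_edge {F : SimpleGraph V} {u v : V} (hne : u ≠ v) :
    trees (F ⊔ edge u v) = (trees F).filter fun T => T.Adj u v := by
  ext T
  simp only [trees, mem_filter, mem_univ, true_and, sup_le_iff, edge_le_iff_adj hne]
  tauto

lemma count_D_adj {F T : SimpleGraph V} (hF : F.IsAcyclic)
    (hcF : Nat.card F.edgeSet + (comps F).card = Fintype.card V)
    (hT : T ∈ trees F) :
    ((D F).filter fun p => T.Adj p.1 p.2).card = 2 * ((comps F).card - 1) := by
  obtain ⟨hle, hconn, hacyc⟩ : F ≤ T ∧ T.Connected ∧ T.IsAcyclic := by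
    simpa [trees] using hT
  have hfilter : ((D F).filter fun p => T.Adj p.1 p.2)
      = univ.filter fun (x, y) => (T \ F).Adj x y := by
    ext ⟨a, b⟩
    simp only [D, mem_filter, mem_univ, true_and, filter_filter, sdiff_adj]
    constructor
    · rintro ⟨hnr, hadj⟩
      exact ⟨hadj, fun hFadj => hnr hFadj.reachable⟩
    · rintro ⟨hadj, hnFadj⟩
      exact ⟨fun hreach => hnFadj (adj_of_reachable_of_le hle hacyc hadj hreach), hadj⟩
  rw [hfilter, ← two_mul_card_edgeFinset]
  simp only [card_edgeFinset_eq_natCard]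
  have hfin1 : (T.edgeSet).Finite := Set.toFinite _
  have hfin2 : (F.edgeSet).Finite := Set.toFinite _
  have hd : Nat.card ↥(T \ F).edgeSet = Nat.card ↥T.edgeSet - Nat.card ↥F.edgeSet := by
    rw [Nat.card_coe_set_eq, Nat.card_coe_set_eq, Nat.card_coe_set_eq,
      edgeSet_sdiff]
    exact Set.ncard_diff (edgeSet_mono hle) hfin2
  have hmono : Nat.card ↥F.edgeSet ≤ Nat.card ↥T.edgeSet := by
    rw [Nat.card_coe_set_eq, Nat.card_coe_set_eq]
    exact Set.ncard_le_ncard (edgeSet_mono hle) hfin1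
  have h1 : T.edgeFinset.card + 1 = Fintype.card V := IsTree.card_edgeFinset ⟨hconn, hacyc⟩
  rw [card_edgeFinset_eq_natCard] at h1
  omega

lemma sum_NT_sup_edge {F : SimpleGraph V} (hF : F.IsAcyclic)
    (hcF : Nat.card F.edgeSet + (comps F).card = Fintype.card V) :
    ∑ p ∈ D F, (trees (F ⊔ edge p.1 p.2)).card
      = 2 * ((comps F).card - 1) * (trees F).card := by
  have h1 : ∀ p ∈ D F, (trees (F ⊔ edge p.1 p.2)).card
      = ((trees F).filter fun T => T.Adj p.1 p.2).card := by
    intro p hp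
    have hne : p.1 ≠ p.2 := by
      intro h
      exact (mem_filter.1 hp).2 (h ▸ Reachable.refl p.1)
    rw [trees_sup_edge hne]
  rw [Finset.sum_congr rfl h1]
  have h2 : ∀ p ∈ D F, ((trees F).filter fun T => T.Adj p.1 p.2).card
      = ∑ T ∈ trees F, if T.Adj p.1 p.2 then 1 else 0 := fun p _ => Finset.card_filter _ _
  rw [Finset.sum_congr rfl h2, Finset.sum_comm]
  have h3 : ∀ T ∈ trees F, (∑ p ∈ D F, if T.Adj p.1 p.2 then 1 else 0)
      = 2 * ((comps F).card - 1) := by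
    intro T hT
    rw [← Finset.card_filter]
    exact count_D_adj hF hcF hT
  rw [Finset.sum_congr rfl h3, Finset.sum_const, smul_eq_mul, mul_comm]

lemma sum_Q_sup_edge (F : SimpleGraph V) (hk : 1 ≤ (comps F).card) :
    ∑ p ∈ D F, ∏ s ∈ comps (F ⊔ edge p.1 p.2), s.card
      = 2 * ((comps F).card - 1) * (Fintype.card V * ∏ s ∈ comps F, s.card) := by
  set Q := ∏ s ∈ comps F, s.card with hQ
  set g : Finset V → Finset V → ℕ :=
    fun s s' => (s.card + s'.card) * ∏ r ∈ ((comps F).erase s).erase s', r.card with hg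
  set h : Finset V → Finset V → ℕ := fun s s' => if s ≠ s' then g s s' else 0 with hh
  have h1 : ∑ p ∈ D F, ∏ s ∈ comps (F ⊔ edge p.1 p.2), s.card
      = ∑ p : V × V, h (comp F p.1) (comp F p.2) := by
    rw [D, Finset.sum_filter]
    refine Finset.sum_congr rfl fun p _ => ?_
    by_cases hr : F.Reachable p.1 p.2
    · rw [if_neg (fun hc => hc hr), hh]
      simp only []
      rw [if_neg (fun hc => hc (reachable_iff_comp_eq.1 hr))]
    · rw [if_pos hr, hh]
      simp only []
      rw [if_pos (fun hc => hr (reachable_iff_comp_eq.2 hc))]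
      exact prod_comps_sup_edge hr
  rw [h1, Fintype.sum_prod_type]
  have h2 : ∀ x : V, ∑ y : V, h (comp F x) (comp F y)
      = ∑ s' ∈ comps F, s'.card * h (comp F x) s' := fun x => sum_comp_fiber _
  rw [Finset.sum_congr rfl (fun x _ => h2 x),
    sum_comp_fiber (fun s => ∑ s' ∈ comps F, s'.card * h s s')]
  have h4 : ∀ s ∈ comps F, s.card * (∑ s' ∈ comps F, s'.card * h s s')
      = ∑ s' ∈ (comps F).erase s, s.card * (s'.card * g s s') := by
    intro s hs
    rw [Finset.mul_sum]
    rw [← Finset.sum_erase (comps F)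
      (f := fun s' => s.card * (s'.card * h s s')) (a := s) (by simp [hh])]
    refine Finset.sum_congr rfl fun s' hs' => ?_
    have hne : s ≠ s' := (Finset.mem_erase.1 hs').1.symm
    rw [hh]
    simp only []
    rw [if_pos hne]
  rw [Finset.sum_congr rfl h4]
  have h5 : ∀ s ∈ comps F, ∀ s' ∈ (comps F).erase s,
      s.card * (s'.card * g s s') = (s.card + s'.card) * Q := by
    intro s hs s' hs'
    have e1 : Q = s.card * ∏ r ∈ (comps F).erase s, r.card :=
      (Finset.mul_prod_erase _ _ hs).symm
    have e2 : ∏ r ∈ (comps F).erase s, r.card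
        = s'.card * ∏ r ∈ ((comps F).erase s).erase s', r.card :=
      (Finset.mul_prod_erase _ _ hs').symm
    rw [hg]
    simp only []
    rw [e1, e2]
    ring
  rw [Finset.sum_congr rfl (fun s hs => Finset.sum_congr rfl (h5 s hs))]
  have h6 : ∑ s ∈ comps F, ∑ s' ∈ (comps F).erase s, (s.card + s'.card)
      = 2 * ((comps F).card - 1) * Fintype.card V := by
    have hn := sum_card_comps F
    have e1 : ∀ s ∈ comps F, ∑ s' ∈ (comps F).erase s, (s.card + s'.card)
        = ((comps F).card - 1) * s.card + ∑ s' ∈ (comps F).erase s, s'.card := by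
      intro s hs
      rw [Finset.sum_add_distrib, Finset.sum_const, Finset.card_erase_of_mem hs, smul_eq_mul]
    obtain ⟨m, hm⟩ : ∃ m, (comps F).card = m + 1 := ⟨(comps F).card - 1, by omega⟩
    have e2 : ∀ s ∈ comps F, (∑ s' ∈ (comps F).erase s, s'.card) + s.card = Fintype.card V := by
      intro s hs
      rw [Finset.sum_erase_add _ _ hs]
      exact hn
    have e3 : (∑ s ∈ comps F, ∑ s' ∈ (comps F).erase s, s'.card) + Fintype.card V
        = (comps F).card * Fintype.card V := by
      have h7 := Finset.sum_congr rfl e2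
      rw [Finset.sum_add_distrib, hn, Finset.sum_const, smul_eq_mul] at h7
      exact h7
    rw [Finset.sum_congr rfl e1, Finset.sum_add_distrib, ← Finset.mul_sum, hn, hm] at *
    rw [hm] at e3
    simp only [Nat.add_sub_cancel]
    have hB2 : (∑ s ∈ comps F, ∑ s' ∈ (comps F).erase s, s'.card) = m * Fintype.card V := by
      rw [add_mul, one_mul] at e3
      omega
    rw [hB2]
    ring
  calc ∑ s ∈ comps F, ∑ s' ∈ (comps F).erase s, (s.card + s'.card) * Q
      = (∑ s ∈ comps F, ∑ s' ∈ (comps F).erase s, (s.card + s'.card)) * Q := by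
        rw [Finset.sum_mul]
        exact Finset.sum_congr rfl fun s _ => (Finset.sum_mul _ _ _).symm
    _ = 2 * ((comps F).card - 1) * Fintype.card V * Q := by rw [h6]
    _ = 2 * ((comps F).card - 1) * (Fintype.card V * Q) := by ring

lemma connected_of_comps_card_eq_one {F : SimpleGraph V} (h : (comps F).card = 1) :
    F.Connected := by
  obtain ⟨s, hs⟩ := Finset.card_eq_one.1 h
  have hsmem : s ∈ comps F := hs ▸ Finset.mem_singleton_self s
  obtain ⟨u0, hu0⟩ := mem_comps.1 hsmem
  haveI : Nonempty V := ⟨u0⟩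
  have hall : ∀ u : V, comp F u = s := fun u => by
    have := comp_mem_comps F u
    rw [hs, Finset.mem_singleton] at this
    exact this
  constructor
  intro a b
  exact reachable_iff_comp_eq.2 ((hall a).trans (hall b).symm)

lemma comps_of_connected {F : SimpleGraph V} (hconn : F.Connected) :
    comps F = {(univ : Finset V)} := by
  haveI : Nonempty V := hconn.nonempty
  have hcomp : ∀ u : V, comp F u = univ := fun u => by
    ext w
    simp only [mem_comp, mem_univ, iff_true]
    exact hconn.preconnected u w
  ext s
  simp only [mem_comps, Finset.mem_singleton]
  constructor
  · rintro ⟨u, rfl⟩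
    exact hcomp u
  · rintro rfl
    exact ⟨Classical.arbitrary V, hcomp _⟩

lemma trees_of_connected {F : SimpleGraph V} (hF : F.IsAcyclic) (hconn : F.Connected) :
    trees F = {F} := by
  ext T
  simp only [trees, mem_filter, mem_univ, true_and, Finset.mem_singleton]
  constructor
  · rintro ⟨hle, hTc, hTa⟩
    have h1 : F.edgeFinset.card + 1 = Fintype.card V := IsTree.card_edgeFinset ⟨hconn, hF⟩
    have h2 : T.edgeFinset.card + 1 = Fintype.card V := IsTree.card_edgeFinset ⟨hTc, hTa⟩
    rw [card_edgeFinset_eq_natCard] at h1 h2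
    have hsub := edgeFinset_mono hle
    have heq : F.edgeFinset = T.edgeFinset :=
      Finset.eq_of_subset_of_card_le hsub
        (by simp only [card_edgeFinset_eq_natCard]; omega)
    have := congrArg (fun (t : Finset (Sym2 V)) => (t : Set (Sym2 V))) heq
    simp only [Set.coe_toFinset, coe_edgeFinset] at this
    exact (edgeSet_inj.1 this).symm
  · rintro rfl
    exact ⟨le_refl _, hconn, hF⟩

lemma cayley [Nonempty V] (k : ℕ) : ∀ (F : SimpleGraph V), F.IsAcyclic → (comps F).card = k →
    (trees F).card * Fintype.card V
        = (∏ s ∈ comps F, s.card) * Fintype.card V ^ (k - 1)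
      ∧ Nat.card F.edgeSet + k = Fintype.card V := by
  induction k with
  | zero =>
    intro F hF hc
    exfalso
    have := comp_mem_comps F (Classical.arbitrary V)
    rw [Finset.card_eq_zero.1 hc] at this
    exact absurd this (Finset.notMem_empty _)
  | succ k ih =>
    intro F hF hc
    rcases Nat.eq_zero_or_pos k with rfl | hk
    · have hconn := connected_of_comps_card_eq_one hc
      have hcomps := comps_of_connected hconn
      refine ⟨?_, ?_⟩
      · rw [trees_of_connected hF hconn, hcomps]
        simp [Finset.card_univ]
      · have h1 := IsTree.card_edgeFinset (G := F) ⟨hconn, hF⟩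
        rw [card_edgeFinset_eq_natCard] at h1
        omega
    · have h2 : 1 < (comps F).card := by omega
      obtain ⟨s, hs, s', hs', hss⟩ := Finset.one_lt_card.1 h2
      obtain ⟨u, hu⟩ := mem_comps.1 hs
      obtain ⟨v, hv⟩ := mem_comps.1 hs'
      have hr : ¬F.Reachable u v := by
        intro h
        exact hss (by rw [← hu, ← hv, comp_eq_comp_of_reachable h])
      have hne : u ≠ v := fun h => hr (h ▸ Reachable.refl u)
      have hF' := isAcyclic_sup_edge hF hr
      have hc' : (comps (F ⊔ edge u v)).card = k := by
        have := card_comps_sup_edge hr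
        omega
      obtain ⟨ih1, ih2⟩ := ih (F ⊔ edge u v) hF' hc'
      have hEc := card_edgeFinset_sup_edge (G := F) (s := u) (t := v)
        (fun h => hr (Adj.reachable h)) hne
      simp only [card_edgeFinset_eq_natCard] at hEc
      have hcF : Nat.card F.edgeSet + (comps F).card = Fintype.card V := by omega
      refine ⟨?_, by omega⟩
      set n := Fintype.card V with hn
      have hsum1 := sum_NT_sup_edge hF hcF
      have hsum2 := sum_Q_sup_edge F (by omega)
      have hcombine : (∑ p ∈ D F, (trees (F ⊔ edge p.1 p.2)).card) * n
          = (∑ p ∈ D F, ∏ s ∈ comps (F ⊔ edge p.1 p.2), s.card) * n ^ (k - 1) := by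
        rw [Finset.sum_mul, Finset.sum_mul]
        refine Finset.sum_congr rfl fun p hp => ?_
        have hrp : ¬F.Reachable p.1 p.2 := (mem_filter.1 hp).2
        exact (ih (F ⊔ edge p.1 p.2) (isAcyclic_sup_edge hF hrp)
          (by have := card_comps_sup_edge hrp; omega)).1
      rw [hsum1, hsum2] at hcombine
      have hkk : (comps F).card - 1 = k := by omega
      rw [hkk] at hcombine
      have hpow : n * n ^ (k - 1) = n ^ k := by
        conv_rhs => rw [show k = (k - 1) + 1 by omega]
        rw [pow_succ]
        ring
      have hfin : 2 * k * ((trees F).card * n)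
          = 2 * k * ((∏ s ∈ comps F, s.card) * n ^ k) := by
        calc 2 * k * ((trees F).card * n)
            = 2 * k * (trees F).card * n := by ring
          _ = 2 * k * (n * ∏ s ∈ comps F, s.card) * n ^ (k - 1) := hcombine
          _ = 2 * k * ((∏ s ∈ comps F, s.card) * (n * n ^ (k - 1))) := by ring
          _ = 2 * k * ((∏ s ∈ comps F, s.card) * n ^ k) := by rw [hpow]
      have := Nat.eq_of_mul_eq_mul_left (by omega : 0 < 2 * k) hfin
      simpa [Nat.succ_sub_one] using this

lemma natCard_trees (F : SimpleGraph V) :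
    Nat.card {T : SimpleGraph V // F ≤ T ∧ T.Connected ∧ T.IsAcyclic} = (trees F).card := by
  have h1 : Nat.card {T : SimpleGraph V // F ≤ T ∧ T.Connected ∧ T.IsAcyclic}
      = ({T : SimpleGraph V | F ≤ T ∧ T.Connected ∧ T.IsAcyclic}).ncard :=
    Nat.card_coe_set_eq _
  rw [h1, Set.ncard_eq_toFinset_card']
  have h2 : {T : SimpleGraph V | F ≤ T ∧ T.Connected ∧ T.IsAcyclic}.toFinset = trees F := by
    ext T
    simp [trees, Set.mem_toFinset]
  rw [h2]

lemma eight_mul_le : ∀ a : ℕ, 3 ≤ a → 8 * a ≤ 3 * 2 ^ a := by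
  intro a
  induction a with
  | zero => omega
  | succ b ih =>
    intro h
    rcases Nat.lt_or_ge b 3 with hb | hb
    · have hb2 : b = 2 := by omega
      subst hb2
      norm_num
    · have h1 := ih hb
      have h2 : 8 ≤ 3 * 2 ^ b := by
        calc 8 ≤ 8 * b := by omega
          _ ≤ 3 * 2 ^ b := h1
      rw [pow_succ]
      omega

lemma le_two_pow_pred {a : ℕ} (ha : 1 ≤ a) : a ≤ 2 ^ (a - 1) := by
  rcases a with _ | b
  · omega
  · have := Nat.lt_two_pow_self (n := b)
    simpa using this

lemma prod_bound {α : Type*} [DecidableEq α] (S : Finset α) (f : α → ℕ)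
    (h1 : ∀ s ∈ S, 1 ≤ f s) {s0 : α} (hs0 : s0 ∈ S) (h3 : 3 ≤ f s0) :
    4 * ∏ s ∈ S, f s ≤ 3 * 2 ^ (∑ s ∈ S, (f s - 1)) := by
  rw [← Finset.mul_prod_erase _ _ hs0, ← Finset.add_sum_erase _ _ hs0, pow_add]
  have hP : ∏ s ∈ S.erase s0, f s ≤ 2 ^ ∑ s ∈ S.erase s0, (f s - 1) := by
    rw [← Finset.prod_pow_eq_pow_sum]
    exact Finset.prod_le_prod' fun i hi =>
      le_two_pow_pred (h1 i (Finset.mem_of_mem_erase hi))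
  have ha : 4 * f s0 ≤ 3 * 2 ^ (f s0 - 1) := by
    have h8 := eight_mul_le (f s0) h3
    have hps : 2 ^ f s0 = 2 ^ (f s0 - 1) * 2 := by
      conv_lhs => rw [show f s0 = (f s0 - 1) + 1 by omega]
      rw [pow_succ]
    rw [hps] at h8
    omega
  calc 4 * (f s0 * ∏ s ∈ S.erase s0, f s)
      = (4 * f s0) * ∏ s ∈ S.erase s0, f s := by ring
    _ ≤ (4 * f s0) * 2 ^ ∑ s ∈ S.erase s0, (f s - 1) := Nat.mul_le_mul_left _ hP
    _ ≤ (3 * 2 ^ (f s0 - 1)) * 2 ^ ∑ s ∈ S.erase s0, (f s - 1) := Nat.mul_le_mul_right _ ha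
    _ = 3 * (2 ^ (f s0 - 1) * 2 ^ ∑ s ∈ S.erase s0, (f s - 1)) := by ring

lemma three_le_card_comp {F : SimpleGraph V} [DecidableRel F.Adj] {v : V}
    (h : 2 ≤ F.degree v) : 3 ≤ (comp F v).card := by
  rw [← card_neighborFinset_eq_degree] at h
  obtain ⟨x, hx, y, hy, hxy⟩ := Finset.one_lt_card.1 h
  have hvx : F.Adj v x := by rwa [mem_neighborFinset] at hx
  have hvy : F.Adj v y := by rwa [mem_neighborFinset] at hy
  have hsub : ({v, x, y} : Finset V) ⊆ comp F v := by
    intro z hz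
    simp only [Finset.mem_insert, Finset.mem_singleton] at hz
    rcases hz with rfl | rfl | rfl
    · exact self_mem_comp F z
    · exact mem_comp.2 hvx.reachable
    · exact mem_comp.2 hvy.reachable
  have hcard : ({v, x, y} : Finset V).card = 3 := by
    rw [Finset.card_insert_of_notMem (by simp [hvx.ne, hvy.ne]),
      Finset.card_insert_of_notMem (by simp [hxy]), Finset.card_singleton]
  exact hcard ▸ Finset.card_le_card hsub

end TreeCountAux

open TreeCountAux in
/-- If `F` is a forest in `K_n` with exactly `t` edges (`1 ≤ t ≤ n/2`) that is not a union
of `t` pairwise vertex-disjoint edges, then the number of spanning trees of `K_n`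
containing `F` is at most `(3/4)·2^t·n^(n-t-2)` (stated multiplied through by `4·n^(t+2)`). -/
theorem count_trees_containing_nonmatching (n t : ℕ) (ht : 1 ≤ t) (htn : 2 * t ≤ n)
    (F : SimpleGraph (Fin n)) [DecidableRel F.Adj] (hF : F.IsAcyclic)
    (hedges : F.edgeFinset.card = t) (hnotmatching : ∃ v : Fin n, 2 ≤ F.degree v) :
    4 * (Nat.card {T : SimpleGraph (Fin n) // F ≤ T ∧ T.Connected ∧ T.IsAcyclic}
        * n ^ (t + 2)) ≤ 3 * (2 ^ t * n ^ n) := by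
  classical
  have hn : 0 < n := by omega
  haveI : Nonempty (Fin n) := ⟨⟨0, hn⟩⟩
  obtain ⟨v, hv⟩ := hnotmatching
  obtain ⟨hformula, hedgeclause⟩ := cayley (V := Fin n) (comps F).card F hF rfl
  rw [Fintype.card_fin] at hformula hedgeclause
  have ht' : Nat.card F.edgeSet = t := by
    rw [natCard_edgeSet]
    exact hedges
  have hedgeclause' : t + (comps F).card = n := by omega
  set k := (comps F).card with hkdef
  have hk1 : 1 ≤ k := Finset.card_pos.2 ⟨_, comp_mem_comps F v⟩
  have hsumcards : ∑ s ∈ comps F, s.card = n := by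
    rw [sum_card_comps, Fintype.card_fin]
  have hpos : ∀ s ∈ comps F, 1 ≤ s.card := by
    intro s hs
    obtain ⟨u, rfl⟩ := mem_comps.1 hs
    exact Finset.card_pos.2 ⟨u, self_mem_comp F u⟩
  have hexp : ∑ s ∈ comps F, (s.card - 1) = t := by
    have hsplit : ∑ s ∈ comps F, ((s.card - 1) + 1) = ∑ s ∈ comps F, s.card :=
      Finset.sum_congr rfl fun s hs => by
        have := hpos s hs
        omega
    rw [Finset.sum_add_distrib, Finset.sum_const, smul_eq_mul, mul_one, hsumcards] at hsplit
    omega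
  have hQbound : 4 * (∏ s ∈ comps F, s.card) ≤ 3 * 2 ^ t := by
    have := prod_bound (comps F) Finset.card hpos (comp_mem_comps F v) (three_le_card_comp hv)
    rwa [hexp] at this
  rw [natCard_trees F]
  have hpow1 : n ^ (t + 2) = n * n ^ (t + 1) := by
    rw [show t + 2 = (t + 1) + 1 by omega, pow_succ]
    ring
  have hpow2 : n ^ (k - 1) * n ^ (t + 1) = n ^ n := by
    rw [← pow_add]
    congr 1
    omega
  calc 4 * ((trees F).card * n ^ (t + 2))
      = 4 * (((trees F).card * n) * n ^ (t + 1)) := by rw [hpow1]; ring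
    _ = 4 * (((∏ s ∈ comps F, s.card) * n ^ (k - 1)) * n ^ (t + 1)) := by rw [hformula]
    _ = (4 * ∏ s ∈ comps F, s.card) * (n ^ (k - 1) * n ^ (t + 1)) := by ring
    _ = (4 * ∏ s ∈ comps F, s.card) * n ^ n := by rw [hpow2]
    _ ≤ (3 * 2 ^ t) * n ^ n := Nat.mul_le_mul_right _ hQbound
    _ = 3 * (2 ^ t * n ^ n) := by ring
end

section
/- For any edge e of K_n and any spanning forest F of K_n not containing e, if T is chosen uniformly at random among spanning trees of K_n containing F, then the probability that T contains e is at most 2/n. -/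
open SimpleGraph

namespace ProbEdgeAux

variable {V : Type*}

/-- After deleting edge `s(x,y)` from a graph, a walk from `v` to `z` yields one of three
reachability configurations. -/
lemma reach_del_aux {G : SimpleGraph V} (x y : V) {v z : V} (p : G.Walk v z) :
    (G.deleteEdges {s(x,y)}).Reachable v z ∨
      ((G.deleteEdges {s(x,y)}).Reachable v x ∧ (G.deleteEdges {s(x,y)}).Reachable z y) ∨
      ((G.deleteEdges {s(x,y)}).Reachable v y ∧ (G.deleteEdges {s(x,y)}).Reachable z x) := by
  set D := G.deleteEdges {s(x,y)} with hD
  induction p with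
  | nil => exact Or.inl (Reachable.refl _)
  | @cons a b z h q ih =>
    by_cases hab : s(a,b) = s(x,y)
    · rcases Sym2.eq_iff.mp hab with ⟨rfl, rfl⟩ | ⟨rfl, rfl⟩
      · -- a = x, b = y
        rcases ih with h1 | ⟨h1, h2⟩ | ⟨h1, h2⟩
        · exact Or.inr (Or.inl ⟨Reachable.refl _, h1.symm⟩)
        · exact Or.inr (Or.inl ⟨Reachable.refl _, h2⟩)
        · exact Or.inl h2.symm
      · -- a = y, b = x
        rcases ih with h1 | ⟨h1, h2⟩ | ⟨h1, h2⟩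
        · exact Or.inr (Or.inr ⟨Reachable.refl _, h1.symm⟩)
        · exact Or.inl h2.symm
        · exact Or.inr (Or.inr ⟨Reachable.refl _, h2⟩)
    · have hadj : D.Adj a b := deleteEdges_adj.mpr ⟨h, by simpa using hab⟩
      rcases ih with h1 | ⟨h1, h2⟩ | ⟨h1, h2⟩
      · exact Or.inl (hadj.reachable.trans h1)
      · exact Or.inr (Or.inl ⟨hadj.reachable.trans h1, h2⟩)
      · exact Or.inr (Or.inr ⟨hadj.reachable.trans h1, h2⟩)

/-- In a connected graph, after deleting an edge `s(x,y)`, every vertex can still reach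
`x` or `y`. -/
lemma reach_del {G : SimpleGraph V} (x y : V) {v : V} (p : G.Walk v x) :
    (G.deleteEdges {s(x,y)}).Reachable v x ∨ (G.deleteEdges {s(x,y)}).Reachable v y := by
  rcases reach_del_aux x y p with h | ⟨h, _⟩ | ⟨h, _⟩
  · exact Or.inl h
  · exact Or.inl h
  · exact Or.inr h

lemma restore {T : SimpleGraph V} {x y : V} (h : T.Adj x y) :
    T.deleteEdges {s(x,y)} ⊔ edge x y = T := by
  ext a b
  simp only [sup_adj, deleteEdges_adj, Set.mem_singleton_iff, edge_adj]
  constructor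
  · rintro (⟨ha, _⟩ | ⟨(⟨rfl, rfl⟩ | ⟨rfl, rfl⟩), _⟩)
    · exact ha
    · exact h
    · exact h.symm
  · intro ha
    by_cases hd : s(a,b) = s(x,y)
    · refine Or.inr ⟨?_, ha.ne⟩
      rcases Sym2.eq_iff.mp hd with ⟨rfl, rfl⟩ | ⟨rfl, rfl⟩
      · exact Or.inl ⟨rfl, rfl⟩
      · exact Or.inr ⟨rfl, rfl⟩
    · exact Or.inl ⟨ha, hd⟩

lemma del_sup {D : SimpleGraph V} {v y : V} (hne : ¬ D.Adj v y) :
    (D ⊔ edge v y).deleteEdges {s(v,y)} = D := by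
  ext a b
  simp only [deleteEdges_adj, sup_adj, edge_adj, Set.mem_singleton_iff]
  constructor
  · rintro ⟨h | ⟨⟨rfl, rfl⟩ | ⟨rfl, rfl⟩, _⟩, hd⟩
    · exact h
    · exact absurd rfl hd
    · exact absurd (Sym2.eq_swap) hd
  · intro h
    refine ⟨Or.inl h, fun hd => hne ?_⟩
    rcases Sym2.eq_iff.mp hd with ⟨rfl, rfl⟩ | ⟨rfl, rfl⟩
    · exact h
    · exact h.symm

lemma bridge_del {T : SimpleGraph V} {x y : V} (hT : T.IsAcyclic) (hxy : T.Adj x y) :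
    ¬ (T.deleteEdges {s(x,y)}).Reachable x y := by
  have h := isAcyclic_iff_forall_adj_isBridge.mp hT hxy
  rw [isBridge_iff] at h
  exact h

lemma exchange {T : SimpleGraph V} {x y u w : V} (hT : T.IsTree) (hxy : T.Adj x y)
    (hu : (T.deleteEdges {s(x,y)}).Reachable u x)
    (hw : (T.deleteEdges {s(x,y)}).Reachable w y) :
    (T.deleteEdges {s(x,y)} ⊔ edge u w).IsTree := by
  set D := T.deleteEdges {s(x,y)} with hD
  have hbr : ¬ D.Reachable x y := bridge_del hT.2 hxy
  have huw : u ≠ w := by rintro rfl; exact hbr (hu.symm.trans hw)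
  have hadj : (D ⊔ edge u w).Adj u w :=
    (sup_adj _ _ _ _).mpr (Or.inr ((edge_adj u w u w).mpr ⟨Or.inl ⟨rfl, rfl⟩, huw⟩))
  have hDle : D ≤ D ⊔ edge u w := le_sup_left
  have hreach : ∀ v, (D ⊔ edge u w).Reachable v u := by
    intro v
    obtain ⟨p⟩ := hT.1.preconnected v x
    rcases reach_del x y p with h | h
    · exact (h.trans hu.symm).mono hDle
    · exact ((h.trans hw.symm).mono hDle).trans hadj.symm.reachable
  constructor
  · exact (connected_iff _).mpr ⟨fun a b => (hreach a).trans (hreach b).symm, hT.1.nonempty⟩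
  · intro a c hc
    by_cases hm : s(u,w) ∈ c.edges
    · have hcyc := adj_and_reachable_delete_edges_iff_exists_cycle.mpr ⟨a, c, hc, hm⟩
      have hle : ((D ⊔ edge u w) \ fromEdgeSet {s(u,w)}) ≤ D := by
        intro a b hab
        have h1 : (D ⊔ edge u w).Adj a b := hab.1
        have h2 : ¬ (fromEdgeSet {s(u,w)} : SimpleGraph V).Adj a b := hab.2
        rcases (sup_adj _ _ _ _).mp h1 with h3 | h3
        · exact h3
        · exfalso
          rcases (edge_adj u w a b).mp h3 with ⟨⟨rfl, rfl⟩ | ⟨rfl, rfl⟩, hne⟩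
          · exact h2 ((fromEdgeSet_adj _).mpr ⟨rfl, hne⟩)
          · exact h2 ((fromEdgeSet_adj _).mpr ⟨Sym2.eq_swap, hne⟩)
      exact hbr (hu.symm.trans ((hcyc.2.mono hle).trans hw))
    · have hsub : ∀ f ∈ c.edges, f ∈ T.edgeSet := by
        intro f hf
        have hf' := c.edges_subset_edgeSet hf
        rw [edgeSet_sup] at hf'
        rcases hf' with hf' | hf'
        · exact (edgeSet_subset_edgeSet.mpr (deleteEdges_le _)) hf'
        · rw [edge_edgeSet_of_ne huw] at hf'
          exact absurd (hf' ▸ hf) hm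
      exact hT.2 (c.transfer T hsub) (hc.transfer hsub)

lemma end_edge_unique {G : SimpleGraph V} {a z u w : V} (p : G.Walk a z)
    (hp : p.IsPath) (hu : s(u, z) ∈ p.edges) (hw : s(w, z) ∈ p.edges) : u = w := by
  induction p with
  | nil => simp at hu
  | @cons a b z h q ih =>
    rw [Walk.cons_isPath_iff] at hp
    rw [Walk.edges_cons, List.mem_cons] at hu hw
    have hzq : z ∈ q.support := q.end_mem_support
    rcases hu with hu | hu <;> rcases hw with hw | hw
    · rcases Sym2.eq_iff.mp hu with ⟨rfl, rfl⟩ | ⟨rfl, hz⟩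
      · rcases Sym2.eq_iff.mp hw with ⟨rfl, _⟩ | ⟨rfl, hz⟩
        · rfl
        · exact absurd (hz ▸ hzq) hp.2
      · exact absurd (hz ▸ hzq) hp.2
    · rcases Sym2.eq_iff.mp hu with ⟨rfl, rfl⟩ | ⟨rfl, hz⟩
      · rw [(Walk.isPath_iff_eq_nil).mp hp.1] at hw
        simp at hw
      · exact absurd (hz ▸ hzq) hp.2
    · rcases Sym2.eq_iff.mp hw with ⟨rfl, rfl⟩ | ⟨rfl, hz⟩
      · rw [(Walk.isPath_iff_eq_nil).mp hp.1] at hu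
        simp at hu
      · exact absurd (hz ▸ hzq) hp.2
    · exact ih hp.1 hu hw

lemma key {T₁ T₂ : SimpleGraph V} {x y v₁ v₂ : V}
    (h₁ : T₁.IsTree) (h₂ : T₂.IsTree) (he₁ : T₁.Adj x y) (he₂ : T₂.Adj x y)
    (hv₁ : (T₁.deleteEdges {s(x,y)}).Reachable v₁ x)
    (hv₂ : (T₂.deleteEdges {s(x,y)}).Reachable v₂ x)
    (heq : T₁.deleteEdges {s(x,y)} ⊔ edge v₁ y = T₂.deleteEdges {s(x,y)} ⊔ edge v₂ y) :
    T₁ = T₂ ∧ v₁ = v₂ := by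
  classical
  set D₁ := T₁.deleteEdges {s(x,y)} with hD₁
  set D₂ := T₂.deleteEdges {s(x,y)} with hD₂
  have hbr₁ : ¬ D₁.Reachable x y := bridge_del h₁.2 he₁
  have hbr₂ : ¬ D₂.Reachable x y := bridge_del h₂.2 he₂
  have hv₁y : v₁ ≠ y := by rintro rfl; exact hbr₁ hv₁.symm
  have hv₂y : v₂ ≠ y := by rintro rfl; exact hbr₂ hv₂.symm
  have hna₁ : ¬ D₁.Adj v₁ y := fun h => hbr₁ (hv₁.symm.trans h.reachable)
  have hna₂ : ¬ D₂.Adj v₂ y := fun h => hbr₂ (hv₂.symm.trans h.reachable)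
  have hT' : (D₁ ⊔ edge v₁ y).IsTree := exchange h₁ he₁ hv₁ (Reachable.refl y)
  obtain ⟨p₀⟩ := hT'.1.preconnected x y
  set p := p₀.toPath with hpdef
  have hmem : ∀ (v : V) (D : SimpleGraph V), ¬ D.Adj v y → ¬ D.Reachable x y →
      D ⊔ edge v y = D₁ ⊔ edge v₁ y → s(v,y) ∈ (p : (D₁ ⊔ edge v₁ y).Walk x y).edges := by
    intro v D hna hbr hDeq
    by_contra hn
    have hdel : ∀ f ∈ (p : (D₁ ⊔ edge v₁ y).Walk x y).edges, f ∉ ({s(v,y)} : Set (Sym2 V)) := by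
      intro f hf hmm
      rw [Set.mem_singleton_iff] at hmm
      exact hn (hmm ▸ hf)
    have hwalk := (p : (D₁ ⊔ edge v₁ y).Walk x y).toDeleteEdges _ hdel
    rw [← hDeq, del_sup hna] at hwalk
    exact hbr hwalk.reachable
  have hm₁ : s(v₁,y) ∈ (p : (D₁ ⊔ edge v₁ y).Walk x y).edges := hmem v₁ D₁ hna₁ hbr₁ rfl
  have hm₂ : s(v₂,y) ∈ (p : (D₁ ⊔ edge v₁ y).Walk x y).edges := hmem v₂ D₂ hna₂ hbr₂ heq.symm
  have hv : v₁ = v₂ := end_edge_unique _ p.2 hm₁ hm₂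
  subst hv
  have hDeq : D₁ = D₂ := by
    have := congrArg (fun G => G.deleteEdges {s(v₁,y)}) heq
    simpa only [del_sup hna₁, del_sup hna₂] using this
  refine ⟨?_, rfl⟩
  rw [← restore he₁, ← restore he₂, ← hD₁, ← hD₂, hDeq]

end ProbEdgeAux

open ProbEdgeAux
/-- If `T` is uniformly random among spanning trees of `K_n` containing the spanning
forest `F`, and `e` is an edge of `K_n` not in `F`, then `P(e ∈ T) ≤ 2/n`. -/
theorem prob_edge_le (n : ℕ) (hn : 2 ≤ n)
    (F : SimpleGraph (Fin n)) (hF : F.IsAcyclic)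
    (e : Sym2 (Fin n)) (he : ¬ e.IsDiag) (heF : e ∉ F.edgeSet) :
    (Nat.card {T : SimpleGraph (Fin n) //
        F ≤ T ∧ e ∈ T.edgeSet ∧ T.Connected ∧ T.IsAcyclic} : ℝ) /
      (Nat.card {T : SimpleGraph (Fin n) // F ≤ T ∧ T.Connected ∧ T.IsAcyclic} : ℝ)
      ≤ 2 / n := by
  classical
  induction e using Sym2.ind with
  | _ x y =>
  rw [Sym2.isDiag_iff_proj_eq] at he
  set Pe := fun T : SimpleGraph (Fin n) => F ≤ T ∧ s(x,y) ∈ T.edgeSet ∧ T.Connected ∧ T.IsAcyclic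
    with hPe
  set P := fun T : SimpleGraph (Fin n) => F ≤ T ∧ T.Connected ∧ T.IsAcyclic with hP
  set A : Finset (SimpleGraph (Fin n)) := Finset.univ.filter Pe with hA
  set B : Finset (SimpleGraph (Fin n)) := Finset.univ.filter P with hB
  have hcardA : Nat.card {T : SimpleGraph (Fin n) // Pe T} = A.card := by
    rw [Nat.card_eq_fintype_card, Fintype.card_subtype]
  have hcardB : Nat.card {T : SimpleGraph (Fin n) // P T} = B.card := by
    rw [Nat.card_eq_fintype_card, Fintype.card_subtype]
  -- the exchange map
  set D : SimpleGraph (Fin n) → SimpleGraph (Fin n) :=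
    fun T => T.deleteEdges {s(x,y)} with hDdef
  set f : SimpleGraph (Fin n) × Fin n → SimpleGraph (Fin n) :=
    fun q => if (D q.1).Reachable q.2 x then D q.1 ⊔ edge q.2 y else D q.1 ⊔ edge q.2 x
    with hf
  set s : Finset (SimpleGraph (Fin n) × Fin n) := A ×ˢ Finset.univ with hs
  have hscard : s.card = A.card * n := by
    rw [hs, Finset.card_product, Finset.card_univ, Fintype.card_fin]
  -- basic facts about members of A
  have hmemA : ∀ T ∈ A, F ≤ T ∧ T.Adj x y ∧ T.IsTree := by
    intro T hT
    rw [hA, Finset.mem_filter] at hT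
    obtain ⟨-, hFT, hxyT, hc, ha⟩ := hT
    exact ⟨hFT, (mem_edgeSet _).mp hxyT, ⟨hc, ha⟩⟩
  have hFD : ∀ T : SimpleGraph (Fin n), F ≤ T → F ≤ D T := by
    intro T hFT a b hab
    refine deleteEdges_adj.mpr ⟨hFT hab, ?_⟩
    rw [Set.mem_singleton_iff]
    intro hd
    exact heF (hd ▸ ((mem_edgeSet _).mpr hab))
  have hswap : ∀ T : SimpleGraph (Fin n), T.deleteEdges {s(y,x)} = D T := by
    intro T
    rw [hDdef]
    rw [Sym2.eq_swap]
  -- the image of the map lands in B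
  have himg : ∀ q ∈ s, f q ∈ B := by
    rintro ⟨T, v⟩ hq
    rw [hs, Finset.mem_product] at hq
    obtain ⟨hFT, hadj, hTt⟩ := hmemA T hq.1
    rw [hB, Finset.mem_filter]
    by_cases hr : (D T).Reachable v x
    · have ht : (D T ⊔ edge v y).IsTree := exchange hTt hadj hr (Reachable.refl y)
      have : f (T, v) = D T ⊔ edge v y := if_pos hr
      rw [this]
      exact ⟨Finset.mem_univ _, le_trans (hFD T hFT) le_sup_left, ht.1, ht.2⟩
    · obtain ⟨p⟩ := hTt.1.preconnected v x
      have hry : (D T).Reachable v y := (reach_del x y p).resolve_left hr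
      have ht : (D T ⊔ edge v x).IsTree := by
        have := exchange (x := y) (y := x) (u := v) (w := x) hTt hadj.symm
          (by rw [hswap]; exact hry) (Reachable.refl x)
        rwa [hswap] at this
      have : f (T, v) = D T ⊔ edge v x := if_neg hr
      rw [this]
      exact ⟨Finset.mem_univ _, le_trans (hFD T hFT) le_sup_left, ht.1, ht.2⟩
  -- fibers have size at most 2
  have hfib : ∀ b ∈ B, (s.filter fun q => f q = b).card ≤ 2 := by
    intro b _
    have h2 : (2 : ℕ) = (Finset.univ : Finset Bool).card := by simp
    rw [h2]
    apply Finset.card_le_card_of_injOn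
      (fun q => if (D q.1).Reachable q.2 x then true else false)
      (fun _ _ => Finset.mem_univ _)
    rintro ⟨T₁, v₁⟩ hq₁ ⟨T₂, v₂⟩ hq₂ hg
    simp only [Finset.coe_filter, Set.mem_setOf_eq] at hq₁ hq₂
    obtain ⟨hq₁s, hfq₁⟩ := hq₁
    obtain ⟨hq₂s, hfq₂⟩ := hq₂
    rw [hs, Finset.mem_product] at hq₁s hq₂s
    obtain ⟨hFT₁, hadj₁, hT₁⟩ := hmemA T₁ hq₁s.1
    obtain ⟨hFT₂, hadj₂, hT₂⟩ := hmemA T₂ hq₂s.1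
    have hfeq : f (T₁, v₁) = f (T₂, v₂) := by rw [hfq₁, hfq₂]
    by_cases hr₁ : (D T₁).Reachable v₁ x
    · have hr₂ : (D T₂).Reachable v₂ x := by
        by_contra hr₂
        simp only [if_pos hr₁, if_neg hr₂] at hg
        exact Bool.noConfusion hg
      rw [show f (T₁, v₁) = D T₁ ⊔ edge v₁ y from if_pos hr₁,
        show f (T₂, v₂) = D T₂ ⊔ edge v₂ y from if_pos hr₂] at hfeq
      obtain ⟨hT, hv⟩ := key hT₁ hT₂ hadj₁ hadj₂ hr₁ hr₂ hfeq
      simp [hT, hv]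
    · have hr₂ : ¬ (D T₂).Reachable v₂ x := by
        intro hr₂
        simp only [if_neg hr₁, if_pos hr₂] at hg
        exact Bool.noConfusion hg
      obtain ⟨p₁⟩ := hT₁.1.preconnected v₁ x
      obtain ⟨p₂⟩ := hT₂.1.preconnected v₂ x
      have hry₁ : (D T₁).Reachable v₁ y := (reach_del x y p₁).resolve_left hr₁
      have hry₂ : (D T₂).Reachable v₂ y := (reach_del x y p₂).resolve_left hr₂
      rw [show f (T₁, v₁) = D T₁ ⊔ edge v₁ x from if_neg hr₁,
        show f (T₂, v₂) = D T₂ ⊔ edge v₂ x from if_neg hr₂] at hfeq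
      obtain ⟨hT, hv⟩ := key (x := y) (y := x) (v₁ := v₁) (v₂ := v₂) hT₁ hT₂ hadj₁.symm hadj₂.symm
        (by rw [hswap]; exact hry₁) (by rw [hswap]; exact hry₂)
        (by rw [hswap, hswap]; exact hfeq)
      simp [hT, hv]
  -- the counting bound
  have hmain : A.card * n ≤ 2 * B.card := by
    rw [← hscard]
    exact Finset.card_le_mul_card_image_of_maps_to himg 2 hfib
  -- numerical conclusion
  rw [hcardA, hcardB]
  have hn0 : (0 : ℝ) < n := by positivity
  rcases Nat.eq_zero_or_pos B.card with hb | hb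
  · have ha : A.card = 0 := by
      by_contra ha
      have := hmain
      rw [hb, Nat.mul_zero] at this
      rcases Nat.mul_eq_zero.mp (Nat.le_zero.mp this) with h | h
      · exact ha h
      · omega
    rw [ha, hb]
    simp only [Nat.cast_zero, zero_div]
    positivity
  · rw [div_le_div_iff₀ (by exact_mod_cast hb) hn0]
    exact_mod_cast hmain
end

section
/- Let A_1, ..., A_n be events with negative dependency graph G, and suppose there exist real numbers x_1, ..., x_n ∈ (0,1) such that P(A_i) ≤ x_i · ∏_{j : (j,i) ∈ E(G)} (1 − x_j) for every i. Then P(⋀_{i=1}^n ¬A_i) ≥ ∏_{j=1}^n (1 − x_j). -/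
open MeasureTheory

/-- The Lopsided Lovász Local Lemma. -/
theorem lopsided_LLL {Ω : Type*} [MeasurableSpace Ω] (μ : Measure Ω)
    [IsProbabilityMeasure μ] (n : ℕ) (A : Fin n → Set Ω)
    (hA : ∀ i, MeasurableSet (A i)) (G : SimpleGraph (Fin n)) [DecidableRel G.Adj]
    (hneg : ∀ i : Fin n, ∀ I : Finset (Fin n),
      (∀ j ∈ I, ¬ G.Adj j i ∧ j ≠ i) →
        (μ (A i ∩ ⋂ j ∈ I, (A j)ᶜ)).toReal ≤
          (μ (A i)).toReal * (μ (⋂ j ∈ I, (A j)ᶜ)).toReal)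
    (x : Fin n → ℝ) (hx : ∀ i, x i ∈ Set.Ioo (0 : ℝ) 1)
    (hbound : ∀ i, (μ (A i)).toReal ≤
      x i * ∏ j ∈ Finset.univ.filter (fun j => G.Adj j i), (1 - x j)) :
    ∏ j, (1 - x j) ≤ (μ (⋂ i, (A i)ᶜ)).toReal := by
  classical
  set Q : Finset (Fin n) → ℝ := fun S => (μ (⋂ j ∈ S, (A j)ᶜ)).toReal with hQdef
  have hQnonneg : ∀ S, 0 ≤ Q S := fun S => ENNReal.toReal_nonneg
  -- splitting lemma
  have hsplit : ∀ (i : Fin n) (S : Finset (Fin n)), i ∉ S →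
      Q (insert i S) = Q S - (μ (A i ∩ ⋂ j ∈ S, (A j)ᶜ)).toReal := by
    intro i S hi
    have h1 : (⋂ j ∈ insert i S, (A j)ᶜ) = (⋂ j ∈ S, (A j)ᶜ) \ A i := by
      rw [Finset.set_biInter_insert]
      ext ω; simp [Set.mem_diff, and_comm]
    have h2 : μ ((⋂ j ∈ S, (A j)ᶜ) ∩ A i) + μ ((⋂ j ∈ S, (A j)ᶜ) \ A i)
        = μ (⋂ j ∈ S, (A j)ᶜ) := measure_inter_add_diff _ (hA i)
    have h3 : ((μ ((⋂ j ∈ S, (A j)ᶜ) ∩ A i)) + (μ ((⋂ j ∈ S, (A j)ᶜ) \ A i))).toReal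
        = (μ ((⋂ j ∈ S, (A j)ᶜ) ∩ A i)).toReal + (μ ((⋂ j ∈ S, (A j)ᶜ) \ A i)).toReal :=
      ENNReal.toReal_add (measure_ne_top μ _) (measure_ne_top μ _)
    have h4 : A i ∩ (⋂ j ∈ S, (A j)ᶜ) = (⋂ j ∈ S, (A j)ᶜ) ∩ A i := Set.inter_comm _ _
    simp only [hQdef, h1, h4]
    rw [← h2, h3]
    ring
  -- monotonicity of toReal measures
  have hmono : ∀ s t : Set Ω, s ⊆ t → (μ s).toReal ≤ (μ t).toReal := by
    intro s t hst
    exact ENNReal.toReal_mono (measure_ne_top μ _) (measure_mono hst)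
  -- main lemma by strong induction on card
  have main : ∀ N : ℕ, ∀ S : Finset (Fin n), S.card ≤ N → ∀ i, i ∉ S →
      (μ (A i ∩ ⋂ j ∈ S, (A j)ᶜ)).toReal ≤ x i * Q S := by
    intro N
    induction N with
    | zero =>
      intro S hS i _
      have hS0 : S = ∅ := Finset.card_eq_zero.mp (Nat.le_zero.mp hS)
      subst hS0
      have hQ1 : Q ∅ = 1 := by simp [hQdef]
      have h1 : (μ (A i ∩ ⋂ j ∈ (∅ : Finset (Fin n)), (A j)ᶜ)).toReal ≤ (μ (A i)).toReal := by
        apply hmono; simp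
      have h2 : (μ (A i)).toReal ≤ x i := by
        refine (hbound i).trans ?_
        have : ∏ j ∈ Finset.univ.filter (fun j => G.Adj j i), (1 - x j) ≤ 1 := by
          apply Finset.prod_le_one
          · intro j _; linarith [(hx j).2]
          · intro j _; linarith [(hx j).1]
        nlinarith [(hx i).1]
      rw [hQ1]
      linarith
    | succ N ih =>
      intro S hS i hi
      set S₁ : Finset (Fin n) := S.filter (fun j => G.Adj j i) with hS₁def
      set S₂ : Finset (Fin n) := S.filter (fun j => ¬ G.Adj j i) with hS₂def
      have hunion : S₂ ∪ S₁ = S := by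
        rw [Finset.union_comm]
        exact Finset.filter_union_filter_not_eq _ S
      -- hneg applied to S₂
      have hneg2 : (μ (A i ∩ ⋂ j ∈ S₂, (A j)ᶜ)).toReal ≤ (μ (A i)).toReal * Q S₂ := by
        apply hneg i S₂
        intro j hj
        rw [hS₂def, Finset.mem_filter] at hj
        exact ⟨hj.2, fun h => hi (h ▸ hj.1)⟩
      -- peeling: for T ⊆ S₁, (∏ j ∈ T, (1 - x j)) * Q S₂ ≤ Q (S₂ ∪ T)
      have peel : ∀ T : Finset (Fin n), T ⊆ S₁ →
          (∏ j ∈ T, (1 - x j)) * Q S₂ ≤ Q (S₂ ∪ T) := by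
        intro T
        induction T using Finset.induction with
        | empty => intro _; simp
        | @insert j T hjT ihT =>
          intro hsub
          have hj1 : j ∈ S₁ := hsub (Finset.mem_insert_self j T)
          have hTsub : T ⊆ S₁ := fun a ha => hsub (Finset.mem_insert_of_mem ha)
          have hjS : j ∈ S := (Finset.mem_filter.mp hj1).1
          have hjadj : G.Adj j i := (Finset.mem_filter.mp hj1).2
          have hjS₂ : j ∉ S₂ := by
            rw [hS₂def, Finset.mem_filter]; tauto
          have hjST : j ∉ S₂ ∪ T := by
            simp [hjS₂, hjT]
          have hcard : (S₂ ∪ T).card ≤ N := by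
            have hsub2 : S₂ ∪ T ⊆ S.erase j := by
              intro a ha
              rcases Finset.mem_union.mp ha with h | h
              · exact Finset.mem_erase.mpr ⟨fun he => hjS₂ (he ▸ h),
                  (Finset.mem_filter.mp h).1⟩
              · exact Finset.mem_erase.mpr ⟨fun he => hjT (he ▸ h),
                  (Finset.mem_filter.mp (hTsub h)).1⟩
            have := Finset.card_le_card hsub2
            have := Finset.card_erase_of_mem hjS
            omega
          have hstep : (μ (A j ∩ ⋂ k ∈ S₂ ∪ T, (A k)ᶜ)).toReal ≤ x j * Q (S₂ ∪ T) :=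
            ih (S₂ ∪ T) hcard j hjST
          have hins : S₂ ∪ insert j T = insert j (S₂ ∪ T) := Finset.union_insert j S₂ T
          have hQins : Q (S₂ ∪ insert j T) = Q (S₂ ∪ T) -
              (μ (A j ∩ ⋂ k ∈ S₂ ∪ T, (A k)ᶜ)).toReal := by
            rw [hins]; exact hsplit j (S₂ ∪ T) hjST
          have hprod : ∏ k ∈ insert j T, (1 - x k) = (1 - x j) * ∏ k ∈ T, (1 - x k) :=
            Finset.prod_insert hjT
          have hIH := ihT hTsub
          have hxj := hx j
          have hTnonneg : 0 ≤ ∏ k ∈ T, (1 - x k) :=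
            Finset.prod_nonneg (fun k _ => by linarith [(hx k).2])
          rw [hQins, hprod]
          nlinarith [hQnonneg (S₂ ∪ T), hQnonneg S₂, hxj.1, hxj.2]
      have hpeel := peel S₁ (le_refl S₁)
      rw [hunion] at hpeel
      -- product over all neighbors ≤ product over S₁
      have hS₁sub : S₁ ⊆ Finset.univ.filter (fun j => G.Adj j i) := by
        intro a ha
        simp only [Finset.mem_filter, Finset.mem_univ, true_and]
        exact (Finset.mem_filter.mp ha).2
      have hprodle : ∏ j ∈ Finset.univ.filter (fun j => G.Adj j i), (1 - x j)
          ≤ ∏ j ∈ S₁, (1 - x j) := by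
        rw [← Finset.prod_sdiff hS₁sub]
        have h1 : ∏ j ∈ (Finset.univ.filter (fun j => G.Adj j i)) \ S₁, (1 - x j) ≤ 1 := by
          apply Finset.prod_le_one
          · intro j _; linarith [(hx j).2]
          · intro j _; linarith [(hx j).1]
        have h2 : 0 ≤ ∏ j ∈ S₁, (1 - x j) :=
          Finset.prod_nonneg (fun k _ => by linarith [(hx k).2])
        nlinarith
      -- chain of inequalities
      have hsub' : (⋂ j ∈ S, (A j)ᶜ) ⊆ ⋂ j ∈ S₂, (A j)ᶜ := by
        intro ω hω
        simp only [Set.mem_iInter] at *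
        intro a ha
        exact hω a (Finset.mem_filter.mp ha).1
      have h1 : (μ (A i ∩ ⋂ j ∈ S, (A j)ᶜ)).toReal ≤ (μ (A i ∩ ⋂ j ∈ S₂, (A j)ᶜ)).toReal :=
        hmono _ _ (Set.inter_subset_inter_right _ hsub')
      have hxi := hx i
      have hQS₂ : 0 ≤ Q S₂ := hQnonneg S₂
      have hPAi : 0 ≤ (μ (A i)).toReal := ENNReal.toReal_nonneg
      have hS₁nonneg : 0 ≤ ∏ j ∈ S₁, (1 - x j) :=
        Finset.prod_nonneg (fun k _ => by linarith [(hx k).2])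
      calc (μ (A i ∩ ⋂ j ∈ S, (A j)ᶜ)).toReal
          ≤ (μ (A i)).toReal * Q S₂ := h1.trans hneg2
        _ ≤ (x i * ∏ j ∈ Finset.univ.filter (fun j => G.Adj j i), (1 - x j)) * Q S₂ :=
            mul_le_mul_of_nonneg_right (hbound i) hQS₂
        _ ≤ (x i * ∏ j ∈ S₁, (1 - x j)) * Q S₂ := by
            apply mul_le_mul_of_nonneg_right _ hQS₂
            exact mul_le_mul_of_nonneg_left hprodle (le_of_lt hxi.1)
        _ = x i * ((∏ j ∈ S₁, (1 - x j)) * Q S₂) := by ring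
        _ ≤ x i * Q S := mul_le_mul_of_nonneg_left hpeel (le_of_lt hxi.1)
  -- lower bound lemma
  have lower : ∀ S : Finset (Fin n), ∏ j ∈ S, (1 - x j) ≤ Q S := by
    intro S
    induction S using Finset.induction with
    | empty => simp [hQdef]
    | @insert i S hiS ihS =>
      rw [Finset.prod_insert hiS, hsplit i S hiS]
      have h1 := main S.card S (le_refl _) i hiS
      have hxi := hx i
      have hSnonneg : 0 ≤ ∏ j ∈ S, (1 - x j) :=
        Finset.prod_nonneg (fun k _ => by linarith [(hx k).2])
      have hkey := mul_le_mul_of_nonneg_left ihS (by linarith [hxi.2] : (0:ℝ) ≤ 1 - x i)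
      nlinarith [hQnonneg S]
  have hfinal := lower Finset.univ
  have huniv : (⋂ j ∈ (Finset.univ : Finset (Fin n)), (A j)ᶜ) = ⋂ i, (A i)ᶜ := by
    simp
  rw [hQdef] at hfinal
  simp only [huniv] at hfinal
  simpa using hfinal
end

section
/- For n ≥ 2 vertices labeled 1,...,n and indeterminates x_1,...,x_n: ∑_{T spanning tree of K_n} ∏_{i=1}^n x_i^{deg_T(i)} = x_1·x_2·...·x_n·(x_1 + x_2 + ... + x_n)^{n−2}. -/
open Finset

namespace CayleyAux

open scoped Classical

variable {V : Type*} [Fintype V] [DecidableEq V]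

/-- `v` eventually reaches `r` under iteration of `p`. -/
def Reaches (p : V → V) (r v : V) : Prop := ∃ k, p^[k] v = r

lemma Reaches.of_fixed {p : V → V} {r v : V} (h : Reaches p r v) (hf : p v = v) : v = r := by
  obtain ⟨k, hk⟩ := h
  rwa [Function.iterate_fixed hf] at hk

lemma Reaches.step {p : V → V} {r v : V} (h : Reaches p r v) (hv : v ≠ r) :
    Reaches p r (p v) := by
  obtain ⟨k, hk⟩ := h
  cases k with
  | zero => exact absurd hk hv
  | succ k => exact ⟨k, by rwa [Function.iterate_succ_apply] at hk⟩

lemma Reaches.of_step {p : V → V} {r v : V} (h : Reaches p r (p v)) : Reaches p r v := by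
  obtain ⟨k, hk⟩ := h
  exact ⟨k + 1, by rwa [Function.iterate_succ_apply]⟩

open scoped Classical in
/-- Arborescences on the vertex set `S`, rooted at `r` (with `r ∉ S`): functions that are
the identity off `S` and from which every vertex of `S` reaches `r`. -/
noncomputable def arbs (S : Finset V) (r : V) : Finset (V → V) :=
  Finset.univ.filter (fun p => (∀ j ∉ S, p j = j) ∧ ∀ j ∈ S, Reaches p r j)

lemma mem_arbs {S : Finset V} {r : V} {p : V → V} :
    p ∈ arbs S r ↔ (∀ j ∉ S, p j = j) ∧ ∀ j ∈ S, Reaches p r j := by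
  simp [arbs]

lemma arbs_maps_to {S : Finset V} {r : V} (hr : r ∉ S) {p : V → V} (hp : p ∈ arbs S r)
    {j : V} (hj : j ∈ S) : p j ∈ insert r (S.erase j) := by
  rw [mem_arbs] at hp
  have hre : Reaches p r j := hp.2 j hj
  have hjr : j ≠ r := fun h => hr (h ▸ hj)
  by_cases h1 : p j = r
  · simp [h1]
  by_cases h2 : p j ∈ S
  · have : p j ≠ j := by
      intro h
      exact hjr (hre.of_fixed h)
    simp [mem_insert, Finset.mem_erase, h2, this]
  · exfalso
    have hre2 : Reaches p r (p j) := hre.step hjr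
    exact h1 (hre2.of_fixed (hp.1 _ h2))

end CayleyAux

set_option linter.unusedSectionVars false

namespace CayleyAux2

open CayleyAux

variable {V : Type*} [Fintype V] [DecidableEq V]

section Contract

variable {S : Finset V} {r m w : V}

/-- decode: from an arborescence `p'` on `S.erase m` and a set `U` of children of `w`
to redirect, build an arborescence on `S` with `p m = w`. -/
def dec (m w : V) (p' : V → V) (U : Finset V) : V → V :=
  fun j => if j = m then w else if j ∈ U then m else p' j

/-- encode -/
def encF (m w : V) (S' : Finset V) (p : V → V) : V → V :=
  fun j => if j ∈ S' then (if p j = m then w else p j) else j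

def encU (m : V) (S' : Finset V) (p : V → V) : Finset V :=
  S'.filter (fun j => p j = m)

variable (hr : r ∉ S) (hm : m ∈ S) (hw : w ∈ insert r (S.erase m))

include hr hm hw

lemma wm : w ≠ m := by
  rintro rfl
  rcases Finset.mem_insert.1 hw with h | h
  · exact hr (h ▸ hm)
  · exact (Finset.mem_erase.1 h).1 rfl

lemma mr : m ≠ r := fun h => hr (h ▸ hm)

lemma dec_mem {p' : V → V} {U : Finset V} (hp' : p' ∈ arbs (S.erase m) r)
    (hU : U ⊆ (S.erase m).filter (fun j => p' j = w)) :
    dec m w p' U ∈ arbs S r ∧ dec m w p' U m = w := by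
  rw [mem_arbs] at hp'
  obtain ⟨hnorm, hreach⟩ := hp'
  have hUS : ∀ j ∈ U, j ∈ S.erase m ∧ p' j = w := by
    intro j hj
    have := hU hj
    rw [Finset.mem_filter] at this
    exact this
  set q := dec m w p' U with hq
  have hdm : q m = w := by simp [hq, dec]
  rw [mem_arbs]
  refine ⟨⟨?_, ?_⟩, hdm⟩
  · intro j hj
    have hjm : j ≠ m := fun h => hj (h ▸ hm)
    have hjU : j ∉ U := fun h => hj (Finset.mem_of_mem_erase (hUS j h).1)
    simp only [hq, dec, if_neg hjm, if_neg hjU]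
    exact hnorm j (fun h => hj (Finset.mem_of_mem_erase h))
  · -- reachability
    have claim : ∀ k, ∀ j ∈ S.erase m, p'^[k] j = r → Reaches q r j := by
      intro k
      induction k using Nat.strong_induction_on with
      | _ k IH =>
        intro j hj hk
        have hjm : j ≠ m := (Finset.mem_erase.1 hj).1
        have hjr : j ≠ r := fun h => hr (h ▸ Finset.mem_of_mem_erase hj)
        cases k with
        | zero => exact absurd hk hjr
        | succ k =>
          rw [Function.iterate_succ_apply] at hk
          by_cases hjU : j ∈ U
          · obtain ⟨_, hpj⟩ := hUS j hjU
            have hdj : q j = m := by simp [hq, dec, hjm, hjU]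
            rcases Finset.mem_insert.1 hw with hwr | hwS
            · -- w = r
              refine ⟨2, ?_⟩
              rw [show (2:ℕ) = 1 + 1 from rfl, Function.iterate_succ_apply, hdj,
                Function.iterate_one, hdm, hwr]
            · -- w ∈ S.erase m
              have hwreach : Reaches q r w := by
                refine IH k (Nat.lt_succ_self k) w hwS ?_
                rwa [hpj] at hk
              have hmre : Reaches q r m :=
                Reaches.of_step (v := m) (show Reaches q r (q m) by rw [hdm]; exact hwreach)
              exact Reaches.of_step (v := j) (show Reaches q r (q j) by rw [hdj]; exact hmre)
          · have hdj : q j = p' j := by simp [hq, dec, hjm, hjU]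
            by_cases hpr : p' j = r
            · exact ⟨1, by rw [Function.iterate_one, hdj, hpr]⟩
            · have hpjS : p' j ∈ S.erase m := by
                by_contra hcon
                rw [Function.iterate_fixed (hnorm _ hcon)] at hk
                exact hpr hk
              have := IH k (Nat.lt_succ_self k) (p' j) hpjS hk
              exact Reaches.of_step (v := j) (hdj ▸ this)
    intro j hj
    by_cases hjm : j = m
    · subst hjm
      rcases Finset.mem_insert.1 hw with hwr | hwS
      · exact ⟨1, by rw [Function.iterate_one, hdm, hwr]⟩
      · obtain ⟨k, hk⟩ := hreach w hwS
        have := claim k w hwS hk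
        exact Reaches.of_step (v := j) (show Reaches q r (q j) by rw [hdm]; exact this)
    · obtain ⟨k, hk⟩ := hreach j (Finset.mem_erase.2 ⟨hjm, hj⟩)
      exact claim k j (Finset.mem_erase.2 ⟨hjm, hj⟩) hk

lemma enc_mem {p : V → V} (hp : p ∈ arbs S r) (hpm : p m = w) :
    encF m w (S.erase m) p ∈ arbs (S.erase m) r ∧
    encU m (S.erase m) p ⊆ (S.erase m).filter (fun j => encF m w (S.erase m) p j = w) := by
  rw [mem_arbs] at hp
  obtain ⟨hnorm, hreach⟩ := hp
  set q := encF m w (S.erase m) p with hq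
  constructor
  · rw [mem_arbs]
    refine ⟨fun j hj => by simp [hq, encF, hj], ?_⟩
    have claim : ∀ k, ∀ j ∈ S.erase m, p^[k] j = r → Reaches q r j := by
      intro k
      induction k using Nat.strong_induction_on with
      | _ k IH =>
        intro j hj hk
        have hjm : j ≠ m := (Finset.mem_erase.1 hj).1
        have hjr : j ≠ r := fun h => hr (h ▸ Finset.mem_of_mem_erase hj)
        cases k with
        | zero => exact absurd hk hjr
        | succ k =>
          rw [Function.iterate_succ_apply] at hk
          by_cases hpj : p j = m
          · have hej : q j = w := by simp [hq, encF, hj, hpj]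
            rw [hpj] at hk
            cases k with
            | zero => exact absurd hk (mr hr hm hw)
            | succ k =>
              rw [Function.iterate_succ_apply, hpm] at hk
              rcases Finset.mem_insert.1 hw with hwr | hwS
              · exact ⟨1, by rw [Function.iterate_one, hej, hwr]⟩
              · have := IH k (by omega) w hwS hk
                exact Reaches.of_step (v := j) (hej ▸ this)
          · have hej : q j = p j := by simp [hq, encF, hj, hpj]
            by_cases hpr : p j = r
            · exact ⟨1, by rw [Function.iterate_one, hej, hpr]⟩
            · have hpjS : p j ∈ S.erase m := by
                refine Finset.mem_erase.2 ⟨hpj, ?_⟩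
                by_contra hcon
                rw [Function.iterate_fixed (hnorm _ hcon)] at hk
                exact hpr hk
              have := IH k (Nat.lt_succ_self k) (p j) hpjS hk
              exact Reaches.of_step (v := j) (hej ▸ this)
    intro j hj
    obtain ⟨k, hk⟩ := hreach j (Finset.mem_of_mem_erase hj)
    exact claim k j hj hk
  · intro j hj
    rw [encU, Finset.mem_filter] at hj
    rw [Finset.mem_filter]
    exact ⟨hj.1, by simp [hq, encF, hj.1, hj.2]⟩

lemma dec_enc {p : V → V} (hp : p ∈ arbs S r) (hpm : p m = w) :
    dec m w (encF m w (S.erase m) p) (encU m (S.erase m) p) = p := by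
  funext j
  by_cases hjm : j = m
  · subst hjm; simp [dec, hpm]
  by_cases hjU : j ∈ encU m (S.erase m) p
  · rw [encU, Finset.mem_filter] at hjU
    simp [dec, hjm, encU, hjU.1, hjU.2]
  · simp only [dec, if_neg hjm, if_neg hjU]
    rw [mem_arbs] at hp
    by_cases hjS : j ∈ S.erase m
    · have hpj : p j ≠ m := by
        intro h
        exact hjU (Finset.mem_filter.2 ⟨hjS, h⟩)
      simp [encF, hjS, hpj]
    · have : j ∉ S := fun h => hjS (Finset.mem_erase.2 ⟨hjm, h⟩)
      simp [encF, hjS, hp.1 j this]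

lemma enc_dec {p' : V → V} {U : Finset V} (hp' : p' ∈ arbs (S.erase m) r)
    (hU : U ⊆ (S.erase m).filter (fun j => p' j = w)) :
    encF m w (S.erase m) (dec m w p' U) = p' ∧ encU m (S.erase m) (dec m w p' U) = U := by
  have hr' : r ∉ S.erase m := fun h => hr (Finset.mem_of_mem_erase h)
  have hp'ne : ∀ j ∈ S.erase m, p' j ≠ m := by
    intro j hj hcon
    have := arbs_maps_to hr' hp' hj
    rw [hcon] at this
    rcases Finset.mem_insert.1 this with h | h
    · exact mr hr hm hw h
    · exact (Finset.mem_erase.1 (Finset.mem_of_mem_erase h)).1 rfl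
  rw [mem_arbs] at hp'
  have hUm : ∀ j ∈ U, j ≠ m := fun j hj => (Finset.mem_erase.1 (Finset.mem_filter.1 (hU hj)).1).1
  constructor
  · funext j
    by_cases hjS : j ∈ S.erase m
    · have hjm : j ≠ m := (Finset.mem_erase.1 hjS).1
      by_cases hjU : j ∈ U
      · have hd : dec m w p' U j = m := by simp [dec, hjm, hjU]
        simp [encF, hjS, hd, (Finset.mem_filter.1 (hU hjU)).2]
      · have hd : dec m w p' U j = p' j := by simp [dec, hjm, hjU]
        simp [encF, hjS, hd, hp'ne j hjS]
    · simp only [encF, if_neg hjS]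
      exact (hp'.1 j hjS).symm
  · ext j
    rw [encU, Finset.mem_filter]
    constructor
    · rintro ⟨hjS, hd⟩
      have hjm : j ≠ m := (Finset.mem_erase.1 hjS).1
      by_cases hjU : j ∈ U
      · exact hjU
      · exfalso
        simp only [dec, if_neg hjm, if_neg hjU] at hd
        exact hp'ne j hjS hd
    · intro hjU
      have hjm : j ≠ m := hUm j hjU
      refine ⟨(Finset.mem_filter.1 (hU hjU)).1, ?_⟩
      simp [dec, hjm, hjU]

lemma update_prod (x : V → ℝ) {p' : V → V} (S' : Finset V) (hmw : w ≠ m)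
    (hp'ne : ∀ j ∈ S', p' j ≠ m) :
    ∑ U ∈ ((S'.filter (fun j => p' j = w)).powerset),
        ∏ j ∈ S', (if j ∈ U then x m else x (p' j)) =
      ∏ j ∈ S', Function.update x w (x w + x m) (p' j) := by
  set F := S'.filter (fun j => p' j = w) with hF
  have split : ∀ (h : V → ℝ), ∏ j ∈ S', h j = (∏ j ∈ F, h j) * ∏ j ∈ S'.filter (fun j => ¬ p' j = w), h j := by
    intro h
    rw [hF, Finset.prod_filter_mul_prod_filter_not]
  calc ∑ U ∈ F.powerset, ∏ j ∈ S', (if j ∈ U then x m else x (p' j))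
      = ∑ U ∈ F.powerset, (∏ j ∈ F, (if j ∈ U then x m else x w)) *
          ∏ j ∈ S'.filter (fun j => ¬ p' j = w), x (p' j) := by
        refine Finset.sum_congr rfl fun U hU => ?_
        rw [Finset.mem_powerset] at hU
        rw [split]
        congr 1
        · refine Finset.prod_congr rfl fun j hj => ?_
          rw [hF, Finset.mem_filter] at hj
          rw [hj.2]
        · refine Finset.prod_congr rfl fun j hj => ?_
          rw [Finset.mem_filter] at hj
          have : j ∉ U := fun h => hj.2 (Finset.mem_filter.1 (hU h)).2
          rw [if_neg this]
    _ = (∏ j ∈ F, (x m + x w)) * ∏ j ∈ S'.filter (fun j => ¬ p' j = w), x (p' j) := by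
        rw [← Finset.sum_mul]
        congr 1
        rw [Finset.prod_add]
        refine Finset.sum_congr rfl fun U hU => ?_
        rw [Finset.mem_powerset] at hU
        rw [Finset.prod_ite]
        congr 1
        · rw [Finset.prod_const, Finset.prod_const]
          congr 1
          rw [Finset.filter_mem_eq_inter, Finset.inter_eq_right.2 hU]
        · rw [Finset.prod_const, Finset.prod_const]
          congr 1
          rw [Finset.filter_not, Finset.filter_mem_eq_inter, Finset.inter_eq_right.2 hU]
    _ = ∏ j ∈ S', Function.update x w (x w + x m) (p' j) := by
        rw [split (fun j => Function.update x w (x w + x m) (p' j))]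
        congr 1
        · refine Finset.prod_congr rfl fun j hj => ?_
          rw [hF, Finset.mem_filter] at hj
          rw [hj.2, Function.update_self, add_comm]
        · refine Finset.prod_congr rfl fun j hj => ?_
          rw [Finset.mem_filter] at hj
          rw [Function.update_of_ne hj.2]

lemma fiber_sum (x : V → ℝ) :
    ∑ p ∈ (arbs S r).filter (fun p => p m = w), ∏ j ∈ S.erase m, x (p j) =
      ∑ p' ∈ arbs (S.erase m) r,
        ∏ j ∈ S.erase m, Function.update x w (x w + x m) (p' j) := by
  classical
  have hmw : w ≠ m := wm hr hm hw
  have step1 : ∑ p ∈ (arbs S r).filter (fun p => p m = w), ∏ j ∈ S.erase m, x (p j) =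
      ∑ q ∈ (arbs (S.erase m) r).sigma
          (fun p' => ((S.erase m).filter (fun j => p' j = w)).powerset),
        ∏ j ∈ S.erase m, (if j ∈ q.2 then x m else x (q.1 j)) := by
    refine Finset.sum_bij' (i := fun p _ => ⟨encF m w (S.erase m) p, encU m (S.erase m) p⟩)
      (j := fun q _ => dec m w q.1 q.2) ?_ ?_ ?_ ?_ ?_
    · intro p hp
      rw [Finset.mem_filter] at hp
      obtain ⟨h1, h2⟩ := enc_mem hr hm hw hp.1 hp.2
      exact Finset.mem_sigma.2 ⟨h1, Finset.mem_powerset.2 h2⟩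
    · intro q hq
      rw [Finset.mem_sigma] at hq
      obtain ⟨h1, h2⟩ := dec_mem hr hm hw hq.1 (Finset.mem_powerset.1 hq.2)
      exact Finset.mem_filter.2 ⟨h1, h2⟩
    · intro p hp
      rw [Finset.mem_filter] at hp
      exact dec_enc hr hm hw hp.1 hp.2
    · intro q hq
      rw [Finset.mem_sigma] at hq
      obtain ⟨h1, h2⟩ := enc_dec hr hm hw hq.1 (Finset.mem_powerset.1 hq.2)
      exact Sigma.ext h1 (heq_of_eq h2)
    · intro p hp
      rw [Finset.mem_filter, mem_arbs] at hp
      refine Finset.prod_congr rfl fun j hj => ?_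
      by_cases hjU : j ∈ encU m (S.erase m) p
      · rw [if_pos hjU]
        rw [encU, Finset.mem_filter] at hjU
        rw [hjU.2]
      · rw [if_neg hjU]
        have hpj : p j ≠ m := fun h => hjU (Finset.mem_filter.2 ⟨hj, h⟩)
        simp [encF, hj, hpj]
  rw [step1, Finset.sum_sigma]
  refine Finset.sum_congr rfl fun p' hp' => ?_
  exact update_prod hr hm hw x (S.erase m) hmw
    (fun j hj => fun h => (by
      have := arbs_maps_to (fun hh => hr (Finset.mem_of_mem_erase hh)) hp' hj
      rw [h] at this
      rcases Finset.mem_insert.1 this with h' | h'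
      · exact mr hr hm hw h'
      · exact (Finset.mem_erase.1 (Finset.mem_of_mem_erase h')).1 rfl))

end Contract

end CayleyAux2

open CayleyAux CayleyAux2

variable {V : Type*} [Fintype V] [DecidableEq V]

lemma arbs_singleton {m r : V} (hrm : r ≠ m) :
    arbs ({m} : Finset V) r = {fun j => if j = m then r else j} := by
  ext p
  rw [mem_arbs, Finset.mem_singleton]
  constructor
  · rintro ⟨hnorm, hreach⟩
    funext j
    by_cases hj : j = m
    · subst hj
      rw [if_pos rfl]
      have hre := hreach j (Finset.mem_singleton_self j)
      by_cases hfix : p j = j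
      · exact absurd (hre.of_fixed hfix).symm hrm
      · have h2 : p j ∉ ({j} : Finset V) := by simpa using hfix
        have := (hre.step (fun h => hrm h.symm)).of_fixed (hnorm _ h2)
        exact this
    · rw [if_neg hj]
      exact hnorm j (by simpa using hj)
  · rintro rfl
    refine ⟨fun j hj => if_neg (by simpa using hj), fun j hj => ?_⟩
    rw [Finset.mem_singleton] at hj
    subst hj
    exact ⟨1, by simp⟩

theorem arbs_sum : ∀ (k : ℕ) (S : Finset V) (r : V) (x : V → ℝ), S.card = k + 1 → r ∉ S →
    ∑ p ∈ arbs S r, ∏ j ∈ S, x (p j) = x r * (x r + ∑ j ∈ S, x j) ^ k := by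
  intro k
  induction k with
  | zero =>
    intro S r x hcard hr
    obtain ⟨m, rfl⟩ := Finset.card_eq_one.1 hcard
    have hrm : r ≠ m := fun h => hr (by simp [h])
    rw [arbs_singleton hrm, Finset.sum_singleton, Finset.prod_singleton]
    simp
  | succ k IH =>
    intro S r x hcard hr
    have hS : S.Nonempty := Finset.card_pos.1 (by omega)
    obtain ⟨m, hm⟩ := hS
    set S' := S.erase m with hS'
    have hcard' : S'.card = k + 1 := by
      rw [hS', Finset.card_erase_of_mem hm, hcard]; omega
    have hr' : r ∉ S' := fun h => hr (Finset.mem_of_mem_erase h)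
    have hmaps : ∀ p ∈ arbs S r, p m ∈ insert r S' :=
      fun p hp => arbs_maps_to hr hp hm
    rw [← Finset.sum_fiberwise_of_maps_to hmaps]
    have key : ∀ w ∈ insert r S',
        ∑ p ∈ (arbs S r).filter (fun p => p m = w), ∏ j ∈ S, x (p j) =
          (if w = r then x r * (x r + x m) else x w * x r) * (x r + ∑ j ∈ S, x j) ^ k := by
      intro w hw
      set y := Function.update x w (x w + x m) with hy
      have hsum : y r + ∑ j ∈ S', y j = x r + ∑ j ∈ S, x j := by
        rcases Finset.mem_insert.1 hw with hwr | hwS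
        · subst hwr
          have h1 : y w = x w + x m := Function.update_self _ _ _
          have h2 : ∑ j ∈ S', y j = ∑ j ∈ S', x j := by
            refine Finset.sum_congr rfl fun j hj => ?_
            exact Function.update_of_ne (fun h => hr' (by rwa [h] at hj)) _ _
          rw [h1, h2, ← Finset.add_sum_erase _ _ hm, ← hS']
          ring
        · have h1 : y r = x r := Function.update_of_ne (fun h => hr' (by rwa [← h] at hwS)) _ _
          have h2 : ∑ j ∈ S', y j = x m + ∑ j ∈ S', x j := by
            rw [← Finset.add_sum_erase _ y hwS, ← Finset.add_sum_erase _ x hwS]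
            have hyw : y w = x w + x m := Function.update_self _ _ _
            rw [hyw]
            have : ∑ j ∈ S'.erase w, y j = ∑ j ∈ S'.erase w, x j :=
              Finset.sum_congr rfl fun j hj =>
                Function.update_of_ne (Finset.mem_erase.1 hj).1 _ _
            rw [this]
            ring
          rw [h1, h2, ← Finset.add_sum_erase _ x hm, ← hS']
      calc ∑ p ∈ (arbs S r).filter (fun p => p m = w), ∏ j ∈ S, x (p j)
          = ∑ p ∈ (arbs S r).filter (fun p => p m = w), x w * ∏ j ∈ S', x (p j) := by
            refine Finset.sum_congr rfl fun p hp => ?_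
            rw [Finset.mem_filter] at hp
            rw [← Finset.mul_prod_erase _ _ hm, hp.2, ← hS']
        _ = x w * ∑ p ∈ (arbs S r).filter (fun p => p m = w), ∏ j ∈ S', x (p j) := by
            rw [Finset.mul_sum]
        _ = x w * ∑ p' ∈ arbs S' r, ∏ j ∈ S', y (p' j) := by
            rw [fiber_sum hr hm hw]
        _ = x w * (y r * (y r + ∑ j ∈ S', y j) ^ k) := by
            rw [IH S' r y hcard' hr']
        _ = (if w = r then x r * (x r + x m) else x w * x r) * (x r + ∑ j ∈ S, x j) ^ k := by
            have hyr : y r = if w = r then x r + x m else x r := by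
              by_cases hwr : w = r
              · rw [if_pos hwr, hy, ← hwr, Function.update_self, hwr]
              · rw [if_neg hwr, hy, Function.update_of_ne (Ne.symm hwr)]
            rw [hsum, hyr]
            by_cases hwr : w = r
            · rw [if_pos hwr, if_pos hwr, hwr]
              ring
            · rw [if_neg hwr, if_neg hwr]
              ring
    rw [Finset.sum_congr rfl key, Finset.sum_insert hr', if_pos rfl]
    have hrest : ∑ w ∈ S', (if w = r then x r * (x r + x m) else x w * x r) *
        (x r + ∑ j ∈ S, x j) ^ k = (∑ w ∈ S', x w) * x r * (x r + ∑ j ∈ S, x j) ^ k := by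
      rw [Finset.sum_mul, Finset.sum_mul]
      refine Finset.sum_congr rfl fun w hw => ?_
      rw [if_neg (fun h => hr' (by rwa [h] at hw))]
    rw [hrest]
    have hsplit : ∑ j ∈ S, x j = x m + ∑ j ∈ S', x j := (Finset.add_sum_erase _ x hm).symm
    rw [hsplit, pow_succ]
    ring

namespace CayleyTree

open Finset SimpleGraph CayleyAux

variable {V : Type*} [Fintype V] [DecidableEq V] {r : V}

/-- No vertex reaching the root can lie on a nontrivial loop. -/
lemma no_loop {p : V → V} (h0 : p r = r) {v : V} (hre : Reaches p r v) (hv : v ≠ r)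
    {m : ℕ} (hm : 1 ≤ m) (hloop : p^[m] v = v) : False := by
  obtain ⟨t, ht⟩ := hre
  have h1 : p^[m * (t + 1)] v = v := by
    rw [Function.iterate_mul]
    exact Function.iterate_fixed hloop (t + 1)
  have h2 : p^[m * (t + 1)] v = r := by
    have hle : t ≤ m * (t + 1) := by nlinarith
    obtain ⟨s, hs⟩ := Nat.exists_eq_add_of_le hle
    rw [hs, add_comm, Function.iterate_add_apply, ht]
    exact Function.iterate_fixed h0 s
  exact hv (h1 ▸ h2 ▸ rfl)

/-- The graph associated to a parent function. -/
def graphOf (p : V → V) : SimpleGraph V := SimpleGraph.fromRel (fun a b => p a = b)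

lemma graphOf_adj {p : V → V} {a b : V} :
    (graphOf p).Adj a b ↔ a ≠ b ∧ (p a = b ∨ p b = a) := by
  simp [graphOf, SimpleGraph.fromRel_adj]

section ArbSide

variable {p : V → V} (h0 : p r = r) (hre : ∀ v, Reaches p r v)

include h0 hre

lemma pv_ne {v : V} (hv : v ≠ r) : p v ≠ v := fun h => hv ((hre v).of_fixed h)

lemma graphOf_adj_parent {v : V} (hv : v ≠ r) : (graphOf p).Adj v (p v) :=
  graphOf_adj.2 ⟨Ne.symm (pv_ne h0 hre hv), Or.inl rfl⟩

lemma graphOf_connected : (graphOf p).Connected := by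
  rw [connected_iff]
  refine ⟨?_, ⟨r⟩⟩
  have key : ∀ k v, p^[k] v = r → (graphOf p).Reachable v r := by
    intro k
    induction k with
    | zero =>
      intro v hv
      rw [Function.iterate_zero_apply] at hv
      subst hv
      rfl
    | succ k IH =>
      intro v hv
      by_cases hvr : v = r
      · subst hvr; rfl
      · rw [Function.iterate_succ_apply] at hv
        exact ((graphOf_adj_parent h0 hre hvr).reachable).trans (IH _ hv)
  intro u v
  obtain ⟨k, hk⟩ := hre u
  obtain ⟨l, hl⟩ := hre v
  exact (key k u hk).trans (key l v hl).symm

/-- descendants of `a` (vertices that reach `a`) are preserved by walks avoiding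
the edge `{a, p a}`. -/
lemma graphOf_isBridge {a : V} (ha : a ≠ r) : (graphOf p).IsBridge s(a, p a) := by
  rw [isBridge_iff]
  intro hreach
  have hpa : ¬ Reaches p a (p a) := by
    intro hcon
    obtain ⟨k, hk⟩ := hcon
    exact no_loop h0 (hre a) ha (m := k + 1) (Nat.succ_le_succ (Nat.zero_le k))
      (by rwa [Function.iterate_succ_apply])
  have key : ∀ (u w : V), ((graphOf p) \ fromEdgeSet {s(a, p a)}).Walk u w →
      Reaches p a u → Reaches p a w := by
    intro u w W
    induction W with
    | nil => exact id
    | @cons u' v' w' h q IH =>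
      intro hu
      refine IH ?_
      rw [sdiff_adj, graphOf_adj] at h
      obtain ⟨⟨hne, hor⟩, hnotmem⟩ := h
      rcases hor with h1 | h2
      · -- p u' = v'
        by_cases hua : u' = a
        · exfalso
          apply hnotmem
          subst hua
          rw [fromEdgeSet_adj, h1]
          exact ⟨Set.mem_singleton _, hne⟩
        · have := hu.step hua
          rwa [h1] at this
      · -- p v' = u'
        have : Reaches p a (p v') := h2 ▸ hu
        exact this.of_step
  obtain ⟨W⟩ := hreach
  exact hpa (key a (p a) W ⟨0, rfl⟩)

lemma graphOf_isAcyclic : (graphOf p).IsAcyclic := by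
  rw [isAcyclic_iff_forall_adj_isBridge]
  intro v w hvw
  rw [graphOf_adj] at hvw
  obtain ⟨hne, h1 | h2⟩ := hvw
  · subst h1
    have hvr : v ≠ r := by
      intro h; subst h; exact hne (h0.symm)
    exact graphOf_isBridge h0 hre hvr
  · subst h2
    have hwr : w ≠ r := by
      intro h; subst h; exact hne h0
    rw [Sym2.eq_swap]
    exact graphOf_isBridge h0 hre hwr

lemma graphOf_isTree : (graphOf p).IsTree :=
  ⟨graphOf_connected h0 hre, graphOf_isAcyclic h0 hre⟩

end ArbSide

end CayleyTree

namespace CayleyTree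

open CayleyAux SimpleGraph Walk

variable {V : Type*} [Fintype V] [DecidableEq V] {r : V}

section TreeSide

variable {T : SimpleGraph V} (hT : T.IsTree)

/-- The canonical path from `v` to the root `r` in a tree. -/
noncomputable def cpath (hT : T.IsTree) (r v : V) : T.Walk v r :=
  (hT.existsUnique_path v r).choose

lemma cpath_isPath (v : V) : (cpath hT r v).IsPath :=
  (hT.existsUnique_path v r).choose_spec.1

lemma cpath_unique {v : V} (w : T.Walk v r) (hw : w.IsPath) : w = cpath hT r v :=
  (hT.existsUnique_path v r).choose_spec.2 w hw

/-- The parent function of a tree. -/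
noncomputable def treeFun (hT : T.IsTree) (r : V) : V → V :=
  fun v => (cpath hT r v).getVert 1

lemma cpath_root : cpath hT r r = Walk.nil := (cpath_unique hT Walk.nil IsPath.nil).symm

lemma treeFun_root : treeFun hT r r = r := by
  unfold treeFun
  rw [cpath_root]
  exact Walk.getVert_of_length_le _ (by simp)

lemma cpath_not_nil {v : V} (hv : v ≠ r) : ¬ (cpath hT r v).Nil :=
  Walk.not_nil_of_ne hv

lemma treeFun_adj {v : V} (hv : v ≠ r) : T.Adj v (treeFun hT r v) :=
  Walk.adj_snd (cpath_not_nil hT hv)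

lemma cpath_tail {v : V} (hv : v ≠ r) :
    (cpath hT r v).tail.copy rfl rfl = cpath hT r (treeFun hT r v) :=
  cpath_unique hT _ (by simpa using (cpath_isPath hT v).tail)

lemma cpath_length_treeFun {v : V} (hv : v ≠ r) :
    (cpath hT r (treeFun hT r v)).length + 1 = (cpath hT r v).length := by
  rw [← cpath_tail hT hv]
  exact Walk.length_tail_add_one (cpath_not_nil hT hv)

lemma treeFun_reaches (v : V) : Reaches (treeFun hT r) r v := by
  suffices H : ∀ k v, (cpath hT r v).length = k → (treeFun hT r)^[k] v = r by
    exact ⟨_, H _ v rfl⟩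
  intro k
  induction k with
  | zero =>
    intro v hv
    have := cpath_isPath hT (r := r) v
    by_cases hvr : v = r
    · exact hvr
    · exact absurd (Walk.nil_iff_length_eq.2 hv) (cpath_not_nil hT hvr)
  | succ k IH =>
    intro v hv
    have hvr : v ≠ r := by
      intro h
      subst h
      rw [cpath_root] at hv
      simp at hv
    rw [Function.iterate_succ_apply]
    refine IH _ ?_
    have := cpath_length_treeFun hT hvr
    omega

/-- Trichotomy: each tree edge is a parent edge in one direction. -/
lemma treeFun_of_adj {a b : V} (hab : T.Adj a b) :
    treeFun hT r a = b ∨ treeFun hT r b = a := by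
  by_cases hmem : a ∈ (cpath hT r b).support
  · -- the path from b to r passes through a; the segment b → a must be the single edge
    right
    have htu : ((cpath hT r b).takeUntil a hmem).IsPath := (cpath_isPath hT b).takeUntil hmem
    have hsingle : (cpath hT r b).takeUntil a hmem = Walk.cons (hab.symm) Walk.nil := by
      have h2 : (Walk.cons (hab.symm) Walk.nil : T.Walk b a).IsPath := by
        simp [Walk.cons_isPath_iff, hab.ne']
      exact Subtype.ext_iff.1 (hT.IsAcyclic.path_unique ⟨_, htu⟩ ⟨_, h2⟩)
    have hspec := (cpath hT r b).take_spec hmem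
    rw [hsingle] at hspec
    unfold treeFun
    rw [← hspec]
    simp [Walk.getVert_cons_succ, Walk.getVert_zero]
  · -- prepending the edge a→b to the path from b gives the path from a
    left
    have hpath : (Walk.cons hab (cpath hT r b)).IsPath := by
      rw [Walk.cons_isPath_iff]
      exact ⟨cpath_isPath hT b, hmem⟩
    have := cpath_unique hT _ hpath
    unfold treeFun
    rw [← this]
    simp [Walk.getVert_cons_succ, Walk.getVert_zero]

end TreeSide

end CayleyTree

namespace CayleyTree

open CayleyAux SimpleGraph Walk Finset

variable {V : Type*} [Fintype V] [DecidableEq V] {r : V}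

section Inverses

variable {p : V → V} (h0 : p r = r) (hre : ∀ v, Reaches p r v)

include h0 hre

lemma treeFun_graphOf : treeFun (graphOf_isTree h0 hre) r = p := by
  classical
  have hT := graphOf_isTree h0 hre
  set dep : V → ℕ := fun v => Nat.find (hre v) with hdep
  have dep_spec : ∀ v, p^[dep v] v = r := fun v => Nat.find_spec (hre v)
  have dep_lt : ∀ v, v ≠ r → dep (p v) < dep v := by
    intro v hv
    have h1 : dep v ≠ 0 := by
      intro hcon
      have := dep_spec v
      rw [hcon, Function.iterate_zero_apply] at this
      exact hv this
    have h2 : p^[dep v - 1] (p v) = r := by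
      have := dep_spec v
      rwa [show dep v = (dep v - 1) + 1 by omega, Function.iterate_succ_apply] at this
    have h3 : dep (p v) ≤ dep v - 1 := Nat.find_min' (hre (p v)) h2
    omega
  have claim : ∀ k v, dep v = k → ∃ w : (graphOf p).Walk v r,
      w.IsPath ∧ w.getVert 1 = p v ∧ ∀ u ∈ w.support, dep u ≤ dep v := by
    intro k
    induction k using Nat.strong_induction_on with
    | _ k IH =>
      intro v hk
      by_cases hv : v = r
      · subst hv
        refine ⟨Walk.nil, IsPath.nil, ?_, ?_⟩
        · rw [h0]
          exact Walk.getVert_of_length_le _ (by simp)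
        · intro u hu
          rw [Walk.support_nil, List.mem_singleton] at hu
          exact hu ▸ le_rfl
      · obtain ⟨w', hw'path, hw'gv, hw'sup⟩ := IH (dep (p v)) (hk ▸ dep_lt v hv) (p v) rfl
        refine ⟨Walk.cons (graphOf_adj_parent h0 hre hv) w', ?_, ?_, ?_⟩
        · rw [Walk.cons_isPath_iff]
          refine ⟨hw'path, fun hmem => ?_⟩
          have := hw'sup v hmem
          have := dep_lt v hv
          omega
        · rw [Walk.getVert_cons_succ, Walk.getVert_zero]
        · intro u hu
          rw [Walk.support_cons, List.mem_cons] at hu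
          rcases hu with rfl | hu
          · exact le_rfl
          · exact le_trans (hw'sup u hu) (le_of_lt (dep_lt v hv))
  funext v
  obtain ⟨w, hwpath, hwgv, _⟩ := claim (dep v) v rfl
  have : w = cpath hT r v := cpath_unique hT w hwpath
  rw [← hwgv, treeFun, ← this]

omit h0 hre in
lemma graphOf_treeFun {T : SimpleGraph V} (hT : T.IsTree) : graphOf (treeFun hT r) = T := by
  ext a b
  rw [graphOf_adj]
  constructor
  · rintro ⟨hne, h1 | h2⟩
    · by_cases har : a = r
      · exfalso
        subst har
        rw [treeFun_root] at h1
        exact hne h1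
      · exact h1 ▸ treeFun_adj hT har
    · by_cases hbr : b = r
      · exfalso
        subst hbr
        rw [treeFun_root] at h2
        exact hne h2.symm
      · exact (h2 ▸ treeFun_adj hT hbr).symm
  · intro hab
    refine ⟨hab.ne, ?_⟩
    rcases treeFun_of_adj hT hab with h | h
    · exact Or.inl h
    · exact Or.inr h

end Inverses

section Degree

lemma degree_eq {T : SimpleGraph V} (hT : T.IsTree) (i : V) [Fintype (T.neighborSet i)] :
    T.degree i =
      ((Finset.univ.erase r).filter (fun j => treeFun hT r j = i)).card +
        (if i = r then 0 else 1) := by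
  classical
  have hunion : T.neighborFinset i =
      ((Finset.univ.erase r).filter (fun j => treeFun hT r j = i)) ∪
        (if i = r then (∅ : Finset V) else {treeFun hT r i}) := by
    ext j
    rw [mem_neighborFinset, Finset.mem_union]
    constructor
    · intro hadj
      rcases treeFun_of_adj (r := r) hT hadj with h1 | h2
      · -- treeFun i = j
        have hir : i ≠ r := by
          intro hir
          subst hir
          rw [treeFun_root] at h1
          exact hadj.ne h1
        right
        rw [if_neg hir, Finset.mem_singleton, h1]
      · -- treeFun j = i
        have hjr : j ≠ r := by
          intro hjr
          subst hjr
          rw [treeFun_root] at h2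
          exact hadj.ne' h2
        left
        rw [Finset.mem_filter]
        exact ⟨Finset.mem_erase.2 ⟨hjr, Finset.mem_univ j⟩, h2⟩
    · intro hj
      rcases hj with hj | hj
      · rw [Finset.mem_filter, Finset.mem_erase] at hj
        obtain ⟨⟨hjr, _⟩, hpj⟩ := hj
        have := treeFun_adj hT (r := r) hjr
        rw [hpj] at this
        exact this.symm
      · by_cases hir : i = r
        · rw [if_pos hir] at hj
          exact absurd hj (Finset.notMem_empty j)
        · rw [if_neg hir, Finset.mem_singleton] at hj
          have := treeFun_adj hT (r := r) hir
          rwa [← hj] at this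
  have hdisj : Disjoint ((Finset.univ.erase r).filter (fun j => treeFun hT r j = i))
      (if i = r then (∅ : Finset V) else {treeFun hT r i}) := by
    by_cases hir : i = r
    · rw [if_pos hir]
      exact Finset.disjoint_empty_right _
    · rw [if_neg hir, Finset.disjoint_right]
      intro j hjB hjA
      rw [Finset.mem_singleton] at hjB
      rw [Finset.mem_filter, Finset.mem_erase] at hjA
      obtain ⟨⟨hjr, _⟩, hpj⟩ := hjA
      refine no_loop (p := treeFun hT r) (treeFun_root hT) (treeFun_reaches hT i) hir
        (m := 2) (by omega) ?_
      show treeFun hT r (treeFun hT r i) = i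
      rw [← hjB, hpj]
  rw [← T.card_neighborFinset_eq_degree i, hunion,
    Finset.card_union_of_disjoint hdisj]
  congr 1
  by_cases hir : i = r
  · rw [if_pos hir, if_pos hir]
    rfl
  · rw [if_neg hir, if_neg hir]
    rfl

end Degree

end CayleyTree


open SimpleGraph

open scoped Classical in
/-- The Cayley–Kirchhoff degree generating function identity:
`∑_{T spanning tree of K_n} ∏ᵢ xᵢ^{deg_T(i)} = x₁⋯xₙ (x₁+⋯+xₙ)^{n-2}`. -/
theorem cayley_degree_identity (n : ℕ) (hn : 2 ≤ n) (x : Fin n → ℝ) :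
    ∑ T : {T : SimpleGraph (Fin n) // T.Connected ∧ T.IsAcyclic},
        ∏ i : Fin n, x i ^ (T.1.degree i) =
      (∏ i : Fin n, x i) * (∑ i : Fin n, x i) ^ (n - 2) := by
  classical
  open CayleyAux CayleyAux2 CayleyTree Finset in
  set r : Fin n := ⟨0, by omega⟩ with hr
  set S : Finset (Fin n) := Finset.univ.erase r with hS
  have hrS : r ∉ S := Finset.notMem_erase r _
  -- membership criteria
  have mem_iff : ∀ p : Fin n → Fin n, p ∈ arbs S r ↔ (p r = r ∧ ∀ v, Reaches p r v) := by
    intro p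
    rw [mem_arbs]
    constructor
    · rintro ⟨hnorm, hreach⟩
      refine ⟨hnorm r hrS, fun v => ?_⟩
      by_cases hv : v = r
      · exact ⟨0, by rw [Function.iterate_zero_apply, hv]⟩
      · exact hreach v (Finset.mem_erase.2 ⟨hv, Finset.mem_univ v⟩)
    · rintro ⟨h0, hre⟩
      refine ⟨fun j hj => ?_, fun j _ => hre j⟩
      have : j = r := by
        by_contra hc
        exact hj (Finset.mem_erase.2 ⟨hc, Finset.mem_univ j⟩)
      rw [this, h0]
  -- the equivalence between trees and arborescences
  have memF : ∀ (T : {T : SimpleGraph (Fin n) // T.Connected ∧ T.IsAcyclic}),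
      treeFun ⟨T.2.1, T.2.2⟩ r ∈ arbs S r := by
    intro T
    rw [mem_iff]
    exact ⟨treeFun_root _, fun v => treeFun_reaches _ v⟩
  let E : {T : SimpleGraph (Fin n) // T.Connected ∧ T.IsAcyclic} ≃ {p // p ∈ arbs S r} :=
    { toFun := fun T => ⟨treeFun ⟨T.2.1, T.2.2⟩ r, memF T⟩
      invFun := fun q =>
        ⟨graphOf q.1,
          (graphOf_isTree ((mem_iff q.1).1 q.2).1 ((mem_iff q.1).1 q.2).2).isConnected,
          (graphOf_isTree ((mem_iff q.1).1 q.2).1 ((mem_iff q.1).1 q.2).2).IsAcyclic⟩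
      left_inv := fun T => by
        apply Subtype.ext
        exact graphOf_treeFun ⟨T.2.1, T.2.2⟩
      right_inv := fun q => by
        apply Subtype.ext
        exact treeFun_graphOf ((mem_iff q.1).1 q.2).1 ((mem_iff q.1).1 q.2).2 }
  rw [← Equiv.sum_comp E.symm (fun T => ∏ i : Fin n, x i ^ (T.1.degree i))]
  have hterm : ∀ q : {p // p ∈ arbs S r},
      (∏ i : Fin n, x i ^ ((E.symm q).1.degree i)) =
        (∏ j ∈ S, x (q.1 j)) * ∏ i ∈ S, x i := by
    intro q
    obtain ⟨p, hp⟩ := q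
    have h0 := ((mem_iff p).1 hp).1
    have hre := ((mem_iff p).1 hp).2
    have hdeg : ∀ i, (graphOf p).degree i =
        (S.filter (fun j => p j = i)).card + (if i = r then 0 else 1) := by
      intro i
      have := degree_eq (r := r) (graphOf_isTree h0 hre) i
      rwa [treeFun_graphOf h0 hre, ← hS] at this
    have hEq : (E.symm ⟨p, hp⟩).1 = graphOf p := rfl
    rw [hEq]
    calc ∏ i : Fin n, x i ^ ((graphOf p).degree i)
        = ∏ i : Fin n, (x i ^ (S.filter (fun j => p j = i)).card *
            x i ^ (if i = r then 0 else 1)) := by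
          refine Finset.prod_congr rfl fun i _ => ?_
          rw [← pow_add, hdeg i]
      _ = (∏ i : Fin n, x i ^ (S.filter (fun j => p j = i)).card) *
            ∏ i : Fin n, x i ^ (if i = r then 0 else 1) := Finset.prod_mul_distrib
      _ = (∏ j ∈ S, x (p j)) * ∏ i ∈ S, x i := by
          congr 1
          · rw [← Finset.prod_fiberwise_of_maps_to (g := p) (t := Finset.univ)
              (fun j _ => Finset.mem_univ (p j)) (fun j => x (p j))]
            refine Finset.prod_congr rfl fun i _ => ?_
            rw [Finset.prod_congr rfl (fun j hj => ?_), Finset.prod_const]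
            exact congrArg x (Finset.mem_filter.1 hj).2
          · rw [← Finset.prod_erase Finset.univ (f := fun i => x i ^ (if i = r then 0 else 1))
              (a := r) (by simp), ← hS]
            refine Finset.prod_congr rfl fun i hi => ?_
            rw [if_neg (Finset.mem_erase.1 hi).1, pow_one]
  rw [Finset.sum_congr rfl (fun q _ => hterm q)]
  rw [← Finset.sum_mul]
  have h1 : ∑ q : {p // p ∈ arbs S r}, ∏ j ∈ S, x (q.1 j) =
      ∑ p ∈ arbs S r, ∏ j ∈ S, x (p j) :=
    (Finset.sum_subtype (arbs S r) (fun _ => Iff.rfl) (fun p => ∏ j ∈ S, x (p j))).symm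
  have hcard : S.card = (n - 2) + 1 := by
    rw [hS, Finset.card_erase_of_mem (Finset.mem_univ r), Finset.card_univ, Fintype.card_fin]
    omega
  rw [h1, arbs_sum (n - 2) S r x hcard hrS]
  have h2 : x r + ∑ j ∈ S, x j = ∑ i, x i := by
    rw [hS]
    exact Finset.add_sum_erase _ x (Finset.mem_univ r)
  have h3 : x r * ∏ i ∈ S, x i = ∏ i, x i := by
    rw [hS]
    exact Finset.mul_prod_erase _ x (Finset.mem_univ r)
  rw [h2, ← h3]
  ring
end
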